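/- arXiv:0903.1375 — 3 statements merged into one kernel-verified Lean document; each statement's English description precedes it below -/
import Mathlib

section
/- A pair (X,Y) ∈ C⁻_λ satisfies the Lyapunov–Perron fixed point equations X(t) = exp(tA)X₀ + ∫_0^t exp((t−s)A) F(X(s),Y(s),s) ds and Y(t) = (1/ε) ∫_{−∞}^t exp((t−s)B/ε) G(X(s),Y(s),s) ds for all t ≤ 0 if and only if X(0) = X₀, the pair (X,Y) is continuously differentiable on (−∞,0], and X′(t) = A X(t) + F(X(t),Y(t),t) and Y′(t) = (1/ε) B Y(t) + (1/ε) G(X(t),Y(t),t) hold for all t ≤ 0. -/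
open MeasureTheory Set
open scoped Topology

noncomputable section

/-- `ℝᵏ` with the Euclidean norm. -/
abbrev Euc (k : ℕ) := EuclideanSpace ℝ (Fin k)

/-- The operator exponential `exp (t • A)` of a linear operator (matrix) `A` on `ℝᵏ`. -/
def expOp {k : ℕ} (A : Euc k →L[ℝ] Euc k) (t : ℝ) : Euc k →L[ℝ] Euc k :=
  NormedSpace.exp (t • A)

/-- Membership in the space `C⁻_ρ`: continuity on `(-∞,0]` together with finiteness of the
weighted sup norm `sup_{t ≤ 0} e^{-ρ t} ‖u t‖`. -/
def memCm (ρ : ℝ) {E : Type*} [NormedAddCommGroup E] (u : ℝ → E) : Prop :=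
  ContinuousOn u (Set.Iic 0) ∧ ∃ C : ℝ, ∀ t ≤ (0:ℝ), Real.exp (-ρ * t) * ‖u t‖ ≤ C

/-- The weighted sup norm `‖u‖_ρ = sup_{t ≤ 0} e^{-ρ t} ‖u t‖` on `C⁻_ρ`. -/
def nrm (ρ : ℝ) {E : Type*} [NormedAddCommGroup E] (u : ℝ → E) : ℝ :=
  ⨆ t : Set.Iic (0:ℝ), Real.exp (-ρ * (t : ℝ)) * ‖u t‖

section Helpers

variable {k : ℕ} (A : Euc k →L[ℝ] Euc k)

lemma LP_expOp_zero : expOp A 0 = 1 := by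
  have h0 : (0:ℝ) • A = 0 := by ext x; simp
  rw [expOp, h0, NormedSpace.exp_zero]

lemma LP_expOp_add_apply (s t : ℝ) (v : Euc k) :
    expOp A (s + t) v = expOp A s (expOp A t v) := by
  have h : expOp A (s + t) = expOp A s * expOp A t := by
    have h0 : (s + t) • A = s • A + t • A := by ext x; simp [add_mul]
    have hc : Commute (s • A) (t • A) := by
      show _ = _
      ext x
      simp only [ContinuousLinearMap.mul_apply, ContinuousLinearMap.smul_apply, _root_.map_smul]
      rw [smul_comm]
    rw [expOp, expOp, expOp, h0]
    exact NormedSpace.exp_add_of_commute_of_mem_ball (𝕂 := ℝ) hc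
      ((NormedSpace.expSeries_radius_eq_top ℝ (Euc k →L[ℝ] Euc k)).symm ▸ edist_lt_top _ _)
      ((NormedSpace.expSeries_radius_eq_top ℝ (Euc k →L[ℝ] Euc k)).symm ▸ edist_lt_top _ _)
  rw [h, ContinuousLinearMap.mul_apply]

lemma LP_expOp_cancel (t : ℝ) (v : Euc k) : expOp A t (expOp A (-t) v) = v := by
  rw [← LP_expOp_add_apply, add_neg_cancel, LP_expOp_zero, ContinuousLinearMap.one_apply]

lemma LP_hasDerivAt_expOp (t : ℝ) :
    HasDerivAt (fun τ : ℝ => expOp A τ) (A * expOp A t) t := by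
  simpa only [expOp] using hasDerivAt_exp_smul_const' A t

lemma LP_continuous_expOp : Continuous fun t : ℝ => expOp A t :=
  continuous_iff_continuousAt.mpr fun t => (LP_hasDerivAt_expOp A t).continuousAt

lemma LP_expOp_comm_apply (t : ℝ) (v : Euc k) : expOp A t (A v) = A (expOp A t v) := by
  have h : expOp A t * A = A * expOp A t := by
    simp only [expOp]
    exact (hasDerivAt_exp_smul_const A t).unique (hasDerivAt_exp_smul_const' A t)
  calc expOp A t (A v) = (expOp A t * A) v := rfl
    _ = (A * expOp A t) v := by rw [h]
    _ = A (expOp A t v) := rfl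

lemma LP_hasDerivAt_expOp_neg (t : ℝ) :
    HasDerivAt (fun τ : ℝ => expOp A (-τ)) ((-1 : ℝ) • (A * expOp A (-t))) t := by
  have hg := LP_hasDerivAt_expOp A (-t)
  have hh : HasDerivAt (fun τ : ℝ => -τ) (-1 : ℝ) t := (hasDerivAt_id t).neg
  exact hg.scomp t hh

end Helpers

lemma LP_hasDerivWithinAt_integral {E : Type*} [NormedAddCommGroup E] [NormedSpace ℝ E]
    [CompleteSpace E] {φ : ℝ → E} (hφ : ContinuousOn φ (Iic 0)) {t : ℝ} (ht : t ≤ 0)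
    {a : ℝ} (ha : a ≤ 0) :
    HasDerivWithinAt (fun s => ∫ x in a..s, φ x) (φ t) (Iic 0) t := by
  have hsub : uIcc a t ⊆ Iic 0 := by
    rcases le_total a t with h' | h'
    · rw [uIcc_of_le h']; exact Icc_subset_Iic_self.trans (Iic_subset_Iic.mpr ht)
    · rw [uIcc_of_ge h']; exact Icc_subset_Iic_self.trans (Iic_subset_Iic.mpr ha)
  have hint : IntervalIntegrable φ volume a t := (hφ.mono hsub).intervalIntegrable
  rcases lt_or_eq_of_le ht with ht' | ht'
  · have hmeas : StronglyMeasurableAtFilter φ (𝓝 t) volume :=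
      ⟨Iio 0, isOpen_Iio.mem_nhds ht',
        (hφ.mono Iio_subset_Iic_self).aestronglyMeasurable measurableSet_Iio⟩
    have hcont : ContinuousAt φ t := (hφ t ht).continuousAt (Iic_mem_nhds ht')
    exact (intervalIntegral.integral_hasDerivAt_right hint hmeas hcont).hasDerivWithinAt
  · subst ht'
    exact intervalIntegral.integral_hasDerivWithinAt_right hint
      (hφ.stronglyMeasurableAtFilter_nhdsWithin measurableSet_Iic 0) (hφ 0 self_mem_Iic)

lemma LP_integral_eq_sub {E : Type*} [NormedAddCommGroup E] [NormedSpace ℝ E]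
    [CompleteSpace E] {W φ : ℝ → E}
    (hW : ∀ s ≤ (0:ℝ), HasDerivWithinAt W (φ s) (Iic 0) s)
    (hφ : ContinuousOn φ (Iic 0)) {t : ℝ} (ht : t ≤ 0) :
    W t = W 0 + ∫ s in (0:ℝ)..t, φ s := by
  have key : ∫ s in t..(0:ℝ), φ s = W 0 - W t := by
    apply intervalIntegral.integral_eq_sub_of_hasDeriv_right_of_le ht
    · intro x hx; exact ((hW x hx.2).continuousWithinAt).mono Icc_subset_Iic_self
    · intro x hx; exact ((hW x hx.2.le).hasDerivAt (Iic_mem_nhds hx.2)).hasDerivWithinAt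
    · exact (hφ.mono (by rw [uIcc_of_le ht]; exact Icc_subset_Iic_self)).intervalIntegrable
  rw [intervalIntegral.integral_symm] at key
  have : W t = W 0 - -∫ s in (0:ℝ)..t, φ s := by
    rw [key]; abel
  rw [this]; abel

lemma LP_integrableOn_exp_mul_Iic {δ : ℝ} (hδ : 0 < δ) (c : ℝ) :
    IntegrableOn (fun s : ℝ => Real.exp (δ * s)) (Iic c) := by
  have hcont : Continuous fun s : ℝ => Real.exp (δ * s) :=
    Real.continuous_exp.comp (continuous_const.mul continuous_id)
  refine integrableOn_Iic_of_intervalIntegral_norm_bounded (δ⁻¹ * Real.exp (δ * c)) c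
    (fun y : ℝ => hcont.integrableOn_Ioc) Filter.tendsto_id ?_
  filter_upwards [Filter.Iic_mem_atBot c] with y hy
  simp only [id_eq]
  have hInt : (∫ x in y..c, ‖Real.exp (δ * x)‖) =
      δ⁻¹ * (Real.exp (δ * c) - Real.exp (δ * y)) := by
    simp only [Real.norm_eq_abs, abs_of_pos (Real.exp_pos _)]
    rw [intervalIntegral.integral_comp_mul_left (fun x => Real.exp x) hδ.ne', integral_exp,
      smul_eq_mul]
  rw [hInt]
  have h1 : Real.exp (δ * y) ≤ Real.exp (δ * c) :=
    Real.exp_le_exp.mpr (mul_le_mul_of_nonneg_left hy hδ.le)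
  nlinarith [Real.exp_pos (δ * y), inv_pos.mpr hδ]

/-- A pair in `C⁻_λ` satisfies the Lyapunov–Perron fixed point equations iff it is
a (continuously differentiable) solution of the slow-fast system on `(-∞,0]` with `X(0) = X₀`. -/
theorem lyapunovPerron_fixedPoint_iff_solution
    {n m : ℕ} (A : Euc n →L[ℝ] Euc n) (B : Euc m →L[ℝ] Euc m)
    (α β : ℝ) (hα : 0 ≤ α) (hβ : β < 0)
    (hA : ∀ t ≤ (0:ℝ), ∀ x : Euc n, ‖expOp A t x‖ ≤ Real.exp (α * t) * ‖x‖)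
    (hB : ∀ t ≥ (0:ℝ), ∀ y : Euc m, ‖expOp B t y‖ ≤ Real.exp (β * t) * ‖y‖)
    (F : Euc n → Euc m → ℝ → Euc n) (G : Euc n → Euc m → ℝ → Euc m)
    (Lf Lg : NNReal)
    (hFc : Continuous fun p : Euc n × Euc m × ℝ => F p.1 p.2.1 p.2.2)
    (hGc : Continuous fun p : Euc n × Euc m × ℝ => G p.1 p.2.1 p.2.2)
    (hFl : ∀ t : ℝ, LipschitzWith Lf fun p : Euc n × Euc m => F p.1 p.2 t)
    (hGl : ∀ t : ℝ, LipschitzWith Lg fun p : Euc n × Euc m => G p.1 p.2 t)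
    (ε lam : ℝ) (hε : 0 < ε) (hε1 : ε ≤ 1)
    (hlam1 : β < ε * lam) (hlam2 : ε * lam < α)
    (hgap : (Lf : ℝ) / (α - lam) + (Lg : ℝ) / (ε * lam - β) < 1)
    (hFG0 : ∃ C : ℝ, ∀ t ≤ (0:ℝ),
      Real.exp (-lam * t) * (‖F 0 0 t‖ + ‖G 0 0 t‖) ≤ C)
    (X₀ : Euc n) (u : ℝ → Euc n × Euc m) (hu : memCm lam u) :
    (∀ t ≤ (0:ℝ),
        (u t).1 = expOp A t X₀ + ∫ s in (0:ℝ)..t, expOp A (t - s) (F (u s).1 (u s).2 s) ∧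
        (u t).2 = (1 / ε) • ∫ s in Set.Iic t, expOp B ((t - s) / ε) (G (u s).1 (u s).2 s)) ↔
      ((u 0).1 = X₀ ∧
        ∀ t ≤ (0:ℝ),
          HasDerivWithinAt (fun s => (u s).1)
            (A (u t).1 + F (u t).1 (u t).2 t) (Set.Iic 0) t ∧
          HasDerivWithinAt (fun s => (u s).2)
            ((1 / ε) • B (u t).2 + (1 / ε) • G (u t).1 (u t).2 t) (Set.Iic 0) t) := by
  obtain ⟨hucont, Cu, hCu⟩ := hu
  obtain ⟨C0, hC0⟩ := hFG0
  have hεne : (ε : ℝ) ≠ 0 := ne_of_gt hε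
  -- the rescaled fast operator
  set B' : Euc m →L[ℝ] Euc m := ε⁻¹ • B with hB'def
  have hB'eq : ∀ τ : ℝ, expOp B (τ / ε) = expOp B' τ := by
    intro τ
    rw [expOp, expOp, hB'def]
    congr 1
    ext x
    simp [div_eq_mul_inv]
    ring
  have hB'app : ∀ y : Euc m, B' y = ε⁻¹ • B y := fun y => rfl
  -- abbreviations
  set f : ℝ → Euc n := fun s => F (u s).1 (u s).2 s with hfdef
  set g : ℝ → Euc m := fun s => G (u s).1 (u s).2 s with hgdef
  set φ : ℝ → Euc n := fun s => expOp A (-s) (f s) with hφdef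
  set h : ℝ → Euc m := fun s => expOp B' (-s) (g s) with hhdef
  have hpaircont : ContinuousOn (fun s : ℝ => ((u s).1, ((u s).2, s))) (Iic 0) :=
    (continuous_fst.comp_continuousOn hucont).prodMk
      ((continuous_snd.comp_continuousOn hucont).prodMk continuousOn_id)
  have hf_cont : ContinuousOn f (Iic 0) := hFc.comp_continuousOn hpaircont
  have hg_cont : ContinuousOn g (Iic 0) := hGc.comp_continuousOn hpaircont
  have hφ_cont : ContinuousOn φ (Iic 0) :=
    isBoundedBilinearMap_apply.continuous.comp_continuousOn
      ((((LP_continuous_expOp A).comp continuous_neg).continuousOn).prodMk hf_cont)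
  have hh_cont : ContinuousOn h (Iic 0) :=
    isBoundedBilinearMap_apply.continuous.comp_continuousOn
      ((((LP_continuous_expOp B').comp continuous_neg).continuousOn).prodMk hg_cont)
  -- elementary bound manipulation
  have exp_shift : ∀ (v s Cc : ℝ), Real.exp (-lam * s) * v ≤ Cc → v ≤ Cc * Real.exp (lam * s) := by
    intro v s Cc hv
    have hpos := Real.exp_pos (lam * s)
    have he : Real.exp (-lam * s) = (Real.exp (lam * s))⁻¹ := by
      rw [neg_mul, Real.exp_neg]
    rw [he] at hv
    calc v = Real.exp (lam * s) * ((Real.exp (lam * s))⁻¹ * v) := by field_simp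
      _ ≤ Real.exp (lam * s) * Cc := mul_le_mul_of_nonneg_left hv hpos.le
      _ = Cc * Real.exp (lam * s) := mul_comm _ _
  have hu_bd : ∀ s ≤ (0:ℝ), ‖u s‖ ≤ Cu * Real.exp (lam * s) := fun s hs =>
    exp_shift _ s _ (hCu s hs)
  have hG0_bd : ∀ s ≤ (0:ℝ), ‖G 0 0 s‖ ≤ C0 * Real.exp (lam * s) := by
    intro s hs
    refine exp_shift _ s _ (le_trans ?_ (hC0 s hs))
    have : ‖G 0 0 s‖ ≤ ‖F 0 0 s‖ + ‖G 0 0 s‖ := le_add_of_nonneg_left (norm_nonneg _)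
    exact mul_le_mul_of_nonneg_left this (Real.exp_pos _).le
  have hg_bd : ∀ s ≤ (0:ℝ), ‖g s‖ ≤ ((Lg : ℝ) * Cu + C0) * Real.exp (lam * s) := by
    intro s hs
    have hlip := (hGl s).dist_le_mul ((u s).1, (u s).2) (0, 0)
    have hdist : dist (((u s).1, (u s).2) : Euc n × Euc m) (0, 0) = ‖u s‖ := by
      have : (((u s).1, (u s).2) : Euc n × Euc m) = u s := rfl
      rw [this]
      exact dist_zero_right _
    rw [hdist] at hlip
    have h1 : ‖g s - G 0 0 s‖ ≤ (Lg : ℝ) * ‖u s‖ := hlip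
    calc ‖g s‖ = ‖(g s - G 0 0 s) + G 0 0 s‖ := by rw [sub_add_cancel]
      _ ≤ ‖g s - G 0 0 s‖ + ‖G 0 0 s‖ := norm_add_le _ _
      _ ≤ (Lg : ℝ) * (Cu * Real.exp (lam * s)) + C0 * Real.exp (lam * s) := by
          refine add_le_add (le_trans h1 ?_) (hG0_bd s hs)
          exact mul_le_mul_of_nonneg_left (hu_bd s hs) Lg.coe_nonneg
      _ = ((Lg : ℝ) * Cu + C0) * Real.exp (lam * s) := by ring
  have hδ : 0 < lam - β / ε := by
    have : β / ε < lam := (div_lt_iff₀ hε).mpr (by linarith [hlam1])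
    linarith
  have hB'bd : ∀ s : ℝ, 0 ≤ s → ∀ y : Euc m, ‖expOp B' s y‖ ≤ Real.exp (β / ε * s) * ‖y‖ := by
    intro s hs y
    rw [← hB'eq]
    have := hB (s / ε) (div_nonneg hs hε.le) y
    rwa [show β * (s / ε) = β / ε * s by ring] at this
  have hh_bd : ∀ s ≤ (0:ℝ), ‖h s‖ ≤ ((Lg : ℝ) * Cu + C0) * Real.exp ((lam - β / ε) * s) := by
    intro s hs
    calc ‖h s‖ ≤ Real.exp (β / ε * (-s)) * ‖g s‖ := hB'bd (-s) (neg_nonneg.mpr hs) (g s)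
      _ ≤ Real.exp (β / ε * (-s)) * (((Lg : ℝ) * Cu + C0) * Real.exp (lam * s)) :=
          mul_le_mul_of_nonneg_left (hg_bd s hs) (Real.exp_pos _).le
      _ = ((Lg : ℝ) * Cu + C0) * (Real.exp (β / ε * (-s)) * Real.exp (lam * s)) := by ring
      _ = ((Lg : ℝ) * Cu + C0) * Real.exp ((lam - β / ε) * s) := by
          rw [← Real.exp_add]; congr 1; ring
  have hh_int : IntegrableOn h (Iic 0) := by
    refine Integrable.mono'
      ((LP_integrableOn_exp_mul_Iic hδ 0).const_mul ((Lg : ℝ) * Cu + C0))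
      (hh_cont.aestronglyMeasurable measurableSet_Iic) ?_
    filter_upwards [ae_restrict_mem measurableSet_Iic] with s hs
    exact hh_bd s hs
  have hsub : ∀ {a b : ℝ}, a ≤ 0 → b ≤ 0 → uIcc a b ⊆ Iic 0 := by
    intro a b ha hb
    rcases le_total a b with h' | h'
    · rw [uIcc_of_le h']; exact Icc_subset_Iic_self.trans (Iic_subset_Iic.mpr hb)
    · rw [uIcc_of_ge h']; exact Icc_subset_Iic_self.trans (Iic_subset_Iic.mpr ha)
  have hφint : ∀ s ≤ (0:ℝ), IntervalIntegrable φ volume 0 s := fun s hs =>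
    (hφ_cont.mono (hsub le_rfl hs)).intervalIntegrable
  have hhint' : ∀ t ≤ (0:ℝ), IntegrableOn h (Iic t) := fun t ht =>
    hh_int.mono_set (Iic_subset_Iic.mpr ht)
  have hshift : ∀ (t s : ℝ) (v : Euc n), expOp A (t - s) v = expOp A t (expOp A (-s) v) := by
    intro t s v; rw [sub_eq_add_neg, LP_expOp_add_apply]
  have hshiftB : ∀ (t s : ℝ) (v : Euc m),
      expOp B ((t - s) / ε) v = expOp B' t (expOp B' (-s) v) := by
    intro t s v; rw [hB'eq, sub_eq_add_neg, LP_expOp_add_apply]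
  constructor
  · -- fixed point ⇒ solution
    intro heq
    have hX_eq : ∀ s ≤ (0:ℝ), (u s).1 = expOp A s (X₀ + ∫ τ in (0:ℝ)..s, φ τ) := by
      intro s hs
      have h1 := (heq s hs).1
      have h2 : (∫ τ in (0:ℝ)..s, expOp A (s - τ) (F (u τ).1 (u τ).2 τ))
          = ∫ τ in (0:ℝ)..s, expOp A s (φ τ) := by
        refine intervalIntegral.integral_congr fun τ _ => ?_
        exact hshift s τ (f τ)
      rw [h1, h2, ContinuousLinearMap.intervalIntegral_comp_comm _ (hφint s hs), ← map_add]
    have hY_eq : ∀ s ≤ (0:ℝ), (u s).2 = (1 / ε) • expOp B' s (∫ τ in Iic s, h τ) := by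
      intro s hs
      have h1 := (heq s hs).2
      have h2 : (∫ τ in Iic s, expOp B ((s - τ) / ε) (G (u τ).1 (u τ).2 τ))
          = ∫ τ in Iic s, expOp B' s (h τ) := by
        refine setIntegral_congr_fun measurableSet_Iic fun τ _ => ?_
        exact hshiftB s τ (g τ)
      rw [h1, h2, ContinuousLinearMap.integral_comp_comm _ (hhint' s hs)]
    have hVsplit : ∀ s ≤ (0:ℝ),
        (∫ τ in Iic s, h τ) = (∫ τ in Iic 0, h τ) + ∫ τ in (0:ℝ)..s, h τ := by
      intro s hs
      have := intervalIntegral.integral_Iic_sub_Iic hh_int (hhint' s hs)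
      rw [sub_eq_iff_eq_add] at this
      rw [this, add_comm]
    refine ⟨?_, ?_⟩
    · have h1 := (heq 0 le_rfl).1
      rw [h1, intervalIntegral.integral_same, add_zero, LP_expOp_zero,
        ContinuousLinearMap.one_apply]
    · intro t ht
      constructor
      · -- X derivative
        have hW : HasDerivWithinAt (fun s => X₀ + ∫ τ in (0:ℝ)..s, φ τ) (φ t) (Iic 0) t :=
          (LP_hasDerivWithinAt_integral hφ_cont ht le_rfl).const_add X₀
        have hc : HasDerivWithinAt (fun s : ℝ => expOp A s) (A * expOp A t) (Iic 0) t :=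
          (LP_hasDerivAt_expOp A t).hasDerivWithinAt
        have hD := hc.clm_apply hW
        have hval : (A * expOp A t) (X₀ + ∫ τ in (0:ℝ)..t, φ τ) + expOp A t (φ t)
            = A (u t).1 + f t := by
          rw [ContinuousLinearMap.mul_apply, ← hX_eq t ht, hφdef]
          simp only []
          rw [LP_expOp_cancel]
        rw [hval] at hD
        exact hD.congr (fun s hs => hX_eq s hs) (hX_eq t ht)
      · -- Y derivative
        have hW : HasDerivWithinAt
            (fun s => (∫ τ in Iic 0, h τ) + ∫ τ in (0:ℝ)..s, h τ) (h t) (Iic 0) t :=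
          (LP_hasDerivWithinAt_integral hh_cont ht le_rfl).const_add _
        have hc : HasDerivWithinAt (fun s : ℝ => expOp B' s) (B' * expOp B' t) (Iic 0) t :=
          (LP_hasDerivAt_expOp B' t).hasDerivWithinAt
        have hD := (hc.clm_apply hW).const_smul (1 / ε)
        have e0 : expOp B' t ((∫ τ in Iic 0, h τ) + ∫ τ in (0:ℝ)..t, h τ)
            = expOp B' t (∫ τ in Iic t, h τ) := by rw [← hVsplit t ht]
        have eY : expOp B' t (∫ τ in Iic t, h τ) = ε • (u t).2 := by
          rw [hY_eq t ht, smul_smul, mul_one_div, div_self hεne, one_smul]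
        have hval : (1 / ε) • ((B' * expOp B' t)
              ((∫ τ in Iic 0, h τ) + ∫ τ in (0:ℝ)..t, h τ) + expOp B' t (h t))
            = (1 / ε) • B (u t).2 + (1 / ε) • g t := by
          rw [ContinuousLinearMap.mul_apply, e0, eY, hhdef]
          simp only []
          rw [LP_expOp_cancel]
          have hB'v : B' (ε • (u t).2) = B (u t).2 := by
            rw [hB'app, _root_.map_smul, smul_smul, inv_mul_cancel₀ hεne, one_smul]
          rw [hB'v, smul_add]
        rw [hval] at hD
        refine hD.congr (fun s hs => ?_) ?_
        · rw [hY_eq s hs]; simp only [Pi.smul_apply]; rw [← hVsplit s hs]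
        · rw [hY_eq t ht]; simp only [Pi.smul_apply]; rw [← hVsplit t ht]
  · -- solution ⇒ fixed point
    rintro ⟨hX0, hD⟩ t ht
    constructor
    · -- slow integral equation
      have hW' : ∀ s ≤ (0:ℝ),
          HasDerivWithinAt (fun τ => expOp A (-τ) ((u τ).1)) (φ s) (Iic 0) s := by
        intro s hs
        have hc : HasDerivWithinAt (fun τ : ℝ => expOp A (-τ))
            ((-1 : ℝ) • (A * expOp A (-s))) (Iic 0) s :=
          (LP_hasDerivAt_expOp_neg A s).hasDerivWithinAt
        have hu1 := (hD s hs).1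
        have hDD := hc.clm_apply hu1
        have hval : ((-1 : ℝ) • (A * expOp A (-s))) ((u s).1)
            + expOp A (-s) (A (u s).1 + f s) = φ s := by
          rw [ContinuousLinearMap.smul_apply, ContinuousLinearMap.mul_apply, map_add,
            LP_expOp_comm_apply, neg_one_smul, hφdef]
          simp only []
          abel
        rw [hval] at hDD
        exact hDD
      have hWt := LP_integral_eq_sub hW' hφ_cont ht
      have hW0 : expOp A (-(0:ℝ)) ((u 0).1) = X₀ := by
        rw [neg_zero, LP_expOp_zero, ContinuousLinearMap.one_apply, hX0]
      rw [hW0] at hWt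
      have hcancel : (u t).1 = expOp A t (expOp A (-t) ((u t).1)) :=
        (LP_expOp_cancel A t _).symm
      rw [hcancel, hWt, map_add,
        ← ContinuousLinearMap.intervalIntegral_comp_comm _ (hφint t ht)]
      congr 1
      refine intervalIntegral.integral_congr fun τ _ => ?_
      exact (hshift t τ (f τ)).symm
    · -- fast integral equation
      have hZ' : ∀ s ≤ (0:ℝ),
          HasDerivWithinAt (fun τ => expOp B' (-τ) ((u τ).2)) ((1 / ε) • h s) (Iic 0) s := by
        intro s hs
        have hc : HasDerivWithinAt (fun τ : ℝ => expOp B' (-τ))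
            ((-1 : ℝ) • (B' * expOp B' (-s))) (Iic 0) s :=
          (LP_hasDerivAt_expOp_neg B' s).hasDerivWithinAt
        have hu2 := (hD s hs).2
        have hDD := hc.clm_apply hu2
        have hval : ((-1 : ℝ) • (B' * expOp B' (-s))) ((u s).2)
            + expOp B' (-s) ((1 / ε) • B (u s).2 + (1 / ε) • g s) = (1 / ε) • h s := by
          have hBY : (1 / ε) • B (u s).2 = B' (u s).2 := by
            rw [hB'app, one_div]
          rw [ContinuousLinearMap.smul_apply, ContinuousLinearMap.mul_apply, map_add, hBY,
            LP_expOp_comm_apply, _root_.map_smul, neg_one_smul, hhdef]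
          simp only []
          abel
        rw [hval] at hDD
        exact hDD
      have hZtendsto : Filter.Tendsto (fun τ => expOp B' (-τ) ((u τ).2))
          Filter.atBot (𝓝 0) := by
        apply squeeze_zero_norm' (a := fun r => Cu * Real.exp ((lam - β / ε) * r))
        · filter_upwards [Filter.Iic_mem_atBot (0:ℝ)] with r hr
          calc ‖expOp B' (-r) ((u r).2)‖
              ≤ Real.exp (β / ε * (-r)) * ‖(u r).2‖ := hB'bd (-r) (neg_nonneg.mpr hr) _
            _ ≤ Real.exp (β / ε * (-r)) * (Cu * Real.exp (lam * r)) :=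
                mul_le_mul_of_nonneg_left
                  (le_trans (norm_snd_le (u r)) (hu_bd r hr)) (Real.exp_pos _).le
            _ = Cu * (Real.exp (β / ε * (-r)) * Real.exp (lam * r)) := by ring
            _ = Cu * Real.exp ((lam - β / ε) * r) := by rw [← Real.exp_add]; congr 1; ring
        · have h1 : Filter.Tendsto (fun r : ℝ => (lam - β / ε) * r) Filter.atBot Filter.atBot :=
            (Filter.tendsto_const_mul_atBot_of_pos hδ).mpr Filter.tendsto_id
          have h2 := Real.tendsto_exp_atBot.comp h1
          have h3 := h2.const_mul Cu
          simpa using h3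
      have hkey : ∫ s in Iic t, (1 / ε) • h s = expOp B' (-t) ((u t).2) - 0 := by
        refine integral_Iic_of_hasDerivAt_of_tendsto ?_ ?_ ?_ hZtendsto
        · exact ((hZ' t ht).continuousWithinAt).mono (Iic_subset_Iic.mpr ht)
        · intro x hx
          have hx0 : x < 0 := lt_of_lt_of_le hx ht
          exact ((hZ' x hx0.le).hasDerivAt (Iic_mem_nhds hx0))
        · exact (hhint' t ht).smul (1 / ε)
      rw [sub_zero] at hkey
      have hZt : expOp B' (-t) ((u t).2) = (1 / ε) • ∫ s in Iic t, h s := by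
        rw [← hkey, integral_smul]
      calc (u t).2 = expOp B' t (expOp B' (-t) ((u t).2)) := (LP_expOp_cancel B' t _).symm
        _ = expOp B' t ((1 / ε) • ∫ s in Iic t, h s) := by rw [hZt]
        _ = (1 / ε) • expOp B' t (∫ s in Iic t, h s) := map_smul _ _ _
        _ = (1 / ε) • ∫ s in Iic t, expOp B' t (h s) := by
            rw [ContinuousLinearMap.integral_comp_comm _ (hhint' t ht)]
        _ = (1 / ε) • ∫ s in Iic t, expOp B ((t - s) / ε) (G (u s).1 (u s).2 s) := by
            congr 1
            refine setIntegral_congr_fun measurableSet_Iic fun τ _ => ?_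
            exact (hshiftB t τ (g τ)).symm
end
end

section
/- The graph of the family (hᵋ_τ)_{τ∈ℝ} is positively invariant for the slow-fast system: if (X(t),Y(t)), t ≥ 0, is a solution of X′ = AX + F(X,Y,t), Y′ = (1/ε)BY + (1/ε)G(X,Y,t) with Y(0) = hᵋ_0(X(0)), then Y(t) = hᵋ_t(X(t)) for all t ≥ 0. -/
open MeasureTheory Set

set_option maxHeartbeats 1000000
set_option synthInstance.maxHeartbeats 1000000

noncomputable section

/-- The time-shifted Lyapunov–Perron map `T_τ(X₀, ·)`. -/
def LPshift {n m : ℕ} (A : Euc n →L[ℝ] Euc n) (B : Euc m →L[ℝ] Euc m)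
    (F : Euc n → Euc m → ℝ → Euc n) (G : Euc n → Euc m → ℝ → Euc m)
    (ε τ : ℝ) (X₀ : Euc n) (u : ℝ → Euc n × Euc m) (t : ℝ) : Euc n × Euc m :=
  (expOp A t X₀ + ∫ s in (0:ℝ)..t, expOp A (t - s) (F (u s).1 (u s).2 (s + τ)),
   (1 / ε) • ∫ s in Set.Iic t, expOp B ((t - s) / ε) (G (u s).1 (u s).2 (s + τ)))

lemma expOp_zero {k : ℕ} (M : Euc k →L[ℝ] Euc k) : expOp M 0 = 1 := by
  rw [expOp, show (0:ℝ) • M = 0 from zero_smul ℝ M]; exact NormedSpace.exp_zero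

lemma expOp_add {k : ℕ} (M : Euc k →L[ℝ] Euc k) (u v : ℝ) (x : Euc k) :
    expOp M (u + v) x = expOp M u (expOp M v x) := by
  have h : expOp M (u + v) = expOp M u * expOp M v := by
    have hcomm : Commute (u • M) (v • M) := by
      show (u • M) * (v • M) = (v • M) * (u • M)
      refine ContinuousLinearMap.ext fun x => ?_
      simp only [ContinuousLinearMap.mul_apply, ContinuousLinearMap.smul_apply, _root_.map_smul]
      rw [smul_comm]
    letI : NormedAlgebra ℚ (Euc k →L[ℝ] Euc k) := NormedAlgebra.restrictScalars ℚ ℝ _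
    rw [expOp, expOp, expOp, show (u+v) • M = u • M + v • M from add_smul u v M]
    exact NormedSpace.exp_add_of_commute hcomm
  rw [h]; rfl

lemma expOp_hasDerivAt {k : ℕ} (M : Euc k →L[ℝ] Euc k) (c b r : ℝ) :
    HasDerivAt (fun r => expOp M (c * (b - r))) (-(c • (expOp M (c * (b - r)) * M))) r := by
  have hl : HasDerivAt (fun r : ℝ => c * (b - r)) (c * (-1)) r :=
    ((hasDerivAt_id r).const_sub b).const_mul c
  have hg := hasDerivAt_exp_smul_const (𝕂 := ℝ) M (c * (b - r))
  have := HasDerivAt.scomp r hg hl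
  simpa [expOp, Function.comp_def, neg_smul, mul_neg, mul_one] using this

lemma expOp_cont {k : ℕ} (M : Euc k →L[ℝ] Euc k) : Continuous (expOp M) := by
  have : Continuous (fun t : ℝ => t • M) := by continuity
  letI hQ : NormedAlgebra ℚ (Euc k →L[ℝ] Euc k) := NormedAlgebra.restrictScalars ℚ ℝ _
  exact NormedSpace.exp_continuous.comp this

lemma shiftIic {E : Type*} [NormedAddCommGroup E] [NormedSpace ℝ E] (f : ℝ → E) (a c : ℝ) :
    ∫ σ in Iic a, f (σ + c) = ∫ u in Iic (a + c), f u := by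
  rw [← integral_indicator measurableSet_Iic, ← integral_indicator measurableSet_Iic]
  have h : ∀ σ : ℝ, (Iic a).indicator (fun σ => f (σ + c)) σ = (Iic (a + c)).indicator f (σ + c) := by
    intro σ
    by_cases hσ : σ ≤ a
    · rw [indicator_of_mem (by exact hσ) _, indicator_of_mem (by simp [mem_Iic]; linarith)]
    · rw [indicator_of_notMem (by exact hσ) _,
        indicator_of_notMem (by simp [mem_Iic]; linarith [lt_of_not_ge hσ])]
  simp_rw [h]
  exact integral_add_right_eq_self ((Iic (a+c)).indicator f) c

lemma shiftIicInt {E : Type*} [NormedAddCommGroup E] {f : ℝ → E} {a c : ℝ}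
    (hf : IntegrableOn f (Iic (a + c))) :
    IntegrableOn (fun σ => f (σ + c)) (Iic a) := by
  have h2 := (MeasurePreserving.integrableOn_comp_preimage
      (measurePreserving_add_right volume c)
      (Homeomorph.addRight c).measurableEmbedding).2 hf
  have h3 : ((fun x : ℝ => x + c) ⁻¹' (Iic (a + c))) = Iic a := by
    ext x; simp
  rwa [h3] at h2

lemma duhamel {k : ℕ} (M : Euc k →L[ℝ] Euc k) (c : ℝ) (u f : ℝ → Euc k) (a b : ℝ) (hab : a ≤ b)
    (hu : ∀ r ∈ Icc a b, HasDerivWithinAt u (c • M (u r) + c • f r) (Icc a b) r)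
    (hf : ContinuousOn f (Icc a b)) :
    u b = expOp M (c * (b - a)) (u a) + c • ∫ r in a..b, expOp M (c * (b - r)) (f r) := by
  set φ := fun r => expOp M (c * (b - r)) (u r) with hφ
  have hucont : ContinuousOn u (Icc a b) := fun r hr => (hu r hr).continuousWithinAt
  have hEcont : Continuous fun r : ℝ => expOp M (c * (b - r)) :=
    (expOp_cont M).comp (by continuity)
  have hφcont : ContinuousOn φ (Icc a b) := hEcont.continuousOn.clm_apply hucont
  have hφd : ∀ r ∈ Icc a b, HasDerivWithinAt φ (c • expOp M (c * (b - r)) (f r)) (Icc a b) r := by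
    intro r hr
    have h1 := (expOp_hasDerivAt M c b r).hasDerivWithinAt (s := Icc a b)
    have h2 := h1.clm_apply (hu r hr)
    refine h2.congr_deriv ?_
    simp only [ContinuousLinearMap.neg_apply, ContinuousLinearMap.smul_apply,
      ContinuousLinearMap.mul_apply, map_add, _root_.map_smul]
    abel
  have hintcont : ContinuousOn (fun r => c • expOp M (c * (b - r)) (f r)) (Icc a b) :=
    (hEcont.continuousOn.clm_apply hf).const_smul c
  have hint : IntervalIntegrable (fun r => c • expOp M (c * (b - r)) (f r)) volume a b := by
    apply ContinuousOn.intervalIntegrable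
    rwa [uIcc_of_le hab]
  have key := intervalIntegral.integral_eq_sub_of_hasDeriv_right_of_le hab hφcont
    (fun x hx => (hφd x ⟨hx.1.le, hx.2.le⟩).mono_of_mem_nhdsWithin
      (Icc_mem_nhdsGT_of_mem ⟨hx.1.le, hx.2⟩)) hint
  have hφb : φ b = u b := by
    simp [hφ, sub_self, mul_zero, expOp_zero]
  have hφa : φ a = expOp M (c * (b - a)) (u a) := rfl
  rw [intervalIntegral.integral_smul] at key
  rw [key, hφb, hφa]
  abel

/-- Positive invariance of the graph of the family `(hᵋ_τ)`: a solution of the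
slow-fast system starting on the graph at time `0` stays on the graph for all `t ≥ 0`.  Here
`hᵋ_τ(X₀)` is the value `Y*_τ(0)` of the second component of the fixed point of `T_τ(X₀,·)`. -/
theorem graph_positively_invariant
    {n m : ℕ} (A : Euc n →L[ℝ] Euc n) (B : Euc m →L[ℝ] Euc m)
    (α β : ℝ) (hα : 0 ≤ α) (hβ : β < 0)
    (hA : ∀ t ≤ (0:ℝ), ∀ x : Euc n, ‖expOp A t x‖ ≤ Real.exp (α * t) * ‖x‖)
    (hB : ∀ t ≥ (0:ℝ), ∀ y : Euc m, ‖expOp B t y‖ ≤ Real.exp (β * t) * ‖y‖)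
    (F : Euc n → Euc m → ℝ → Euc n) (G : Euc n → Euc m → ℝ → Euc m)
    (Lf Lg : NNReal)
    (hFc : Continuous fun p : Euc n × Euc m × ℝ => F p.1 p.2.1 p.2.2)
    (hGc : Continuous fun p : Euc n × Euc m × ℝ => G p.1 p.2.1 p.2.2)
    (hFl : ∀ t : ℝ, LipschitzWith Lf fun p : Euc n × Euc m => F p.1 p.2 t)
    (hGl : ∀ t : ℝ, LipschitzWith Lg fun p : Euc n × Euc m => G p.1 p.2 t)
    (ε lam : ℝ) (hε : 0 < ε) (hε1 : ε ≤ 1)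
    (hlam1 : β < ε * lam) (hlam2 : ε * lam < α)
    (hgap : (Lf : ℝ) / (α - lam) + (Lg : ℝ) / (ε * lam - β) < 1)
    (hFG0 : ∀ τ : ℝ, ∃ C : ℝ, ∀ t ≤ (0:ℝ),
      Real.exp (-lam * t) * (‖F 0 0 (t + τ)‖ + ‖G 0 0 (t + τ)‖) ≤ C)
    (X : ℝ → Euc n) (Y : ℝ → Euc m)
    (hX : ∀ t ≥ (0:ℝ), HasDerivWithinAt X (A (X t) + F (X t) (Y t) t) (Set.Ici 0) t)
    (hY : ∀ t ≥ (0:ℝ), HasDerivWithinAt Y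
      ((1 / ε) • B (Y t) + (1 / ε) • G (X t) (Y t) t) (Set.Ici 0) t)
    (h0 : ∃ w : ℝ → Euc n × Euc m,
      (memCm lam w ∧ ∀ s ≤ (0:ℝ), w s = LPshift A B F G ε 0 (X 0) w s) ∧
        Y 0 = (w 0).2) :
    ∀ t ≥ (0:ℝ), ∃ w : ℝ → Euc n × Euc m,
      (memCm lam w ∧ ∀ s ≤ (0:ℝ), w s = LPshift A B F G ε t (X t) w s) ∧
        Y t = (w 0).2 := by
  intro t ht
  obtain ⟨w₀, ⟨⟨hw₀c, C₀, hw₀b⟩, hw₀fix⟩, hY0⟩ := h0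
  set Z : ℝ → Euc n × Euc m := fun r => (X r, Y r) with hZdef
  have hXc : ContinuousOn X (Ici 0) := fun r hr => (hX r hr).continuousWithinAt
  have hYc : ContinuousOn Y (Ici 0) := fun r hr => (hY r hr).continuousWithinAt
  have hZc : ContinuousOn Z (Ici 0) := hXc.prodMk hYc
  -- Duhamel formulas for the solution
  have dX : ∀ a b : ℝ, 0 ≤ a → a ≤ b →
      X b = expOp A (b - a) (X a) + ∫ r in a..b, expOp A (b - r) (F (X r) (Y r) r) := by
    intro a b ha hab
    have hd := duhamel A 1 X (fun r => F (X r) (Y r) r) a b hab ?_ ?_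
    · simpa [one_mul, one_smul] using hd
    · intro r hr
      have := hX r (ha.trans hr.1)
      have h2 := this.mono (fun x hx => ha.trans hx.1 : Icc a b ⊆ Ici 0)
      simpa [one_smul] using h2
    · exact hFc.comp_continuousOn
        (((hXc.mono (fun x hx => ha.trans hx.1)).prodMk
          ((hYc.mono (fun x hx => ha.trans hx.1)).prodMk continuousOn_id)))
  have dY : ∀ a b : ℝ, 0 ≤ a → a ≤ b →
      Y b = expOp B ((b - a) / ε) (Y a)
        + (1/ε) • ∫ r in a..b, expOp B ((b - r) / ε) (G (X r) (Y r) r) := by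
    intro a b ha hab
    have hd := duhamel B (1/ε) Y (fun r => G (X r) (Y r) r) a b hab ?_ ?_
    · simpa [one_div, div_eq_inv_mul] using hd
    · intro r hr
      have := hY r (ha.trans hr.1)
      exact this.mono (fun x hx => ha.trans hx.1 : Icc a b ⊆ Ici 0)
    · exact hGc.comp_continuousOn
        (((hXc.mono (fun x hx => ha.trans hx.1)).prodMk
          ((hYc.mono (fun x hx => ha.trans hx.1)).prodMk continuousOn_id)))
  -- the matching point
  have hZ0 : w₀ 0 = Z 0 := by
    have h1 : (w₀ 0).1 = X 0 := by
      rw [hw₀fix 0 le_rfl]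
      simp [LPshift, expOp_zero, intervalIntegral.integral_same]
    exact Prod.ext h1 hY0.symm
  -- the candidate fixed point at time t
  set w : ℝ → Euc n × Euc m := fun s => w₀ (min s (-t) + t) - w₀ 0 + Z (max s (-t) + t)
    with hwdef
  have hw₁ : ∀ s, -t ≤ s → w s = Z (s + t) := by
    intro s hs
    simp [hwdef, min_eq_right hs, max_eq_left hs]
  have hw₂ : ∀ s, s ≤ -t → w s = w₀ (s + t) := by
    intro s hs
    simp [hwdef, min_eq_left hs, max_eq_right hs, hZ0.symm]
  have hwc : ContinuousOn w (Iic 0) := by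
    apply ContinuousOn.add
    · apply ContinuousOn.sub _ continuousOn_const
      apply hw₀c.comp (((continuous_id.min continuous_const).add continuous_const).continuousOn)
      intro s hs
      simp only [mem_Iic, id_eq, Pi.add_apply]
      have h' : s ⊓ -t ≤ -t := min_le_right _ _
      linarith
    · apply hZc.comp (((continuous_id.max continuous_const).add continuous_const).continuousOn)
      intro s hs
      simp only [mem_Ici, id_eq, Pi.add_apply]
      have h' : -t ≤ s ⊔ -t := le_max_right _ _
      linarith
  have hbound : ∃ C : ℝ, ∀ s ≤ (0:ℝ), Real.exp (-lam * s) * ‖w s‖ ≤ C := by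
    obtain ⟨MZ, hMZ⟩ := (isCompact_Icc (a := (0:ℝ)) (b := t)).exists_bound_of_continuousOn
      (hZc.mono Icc_subset_Ici_self)
    refine ⟨max (Real.exp (|lam| * t) * max MZ 0) (Real.exp (lam * t) * C₀), fun s hs => ?_⟩
    by_cases hst : -t ≤ s
    · rw [hw₁ s hst]
      refine le_trans ?_ (le_max_left _ _)
      have he : Real.exp (-lam * s) ≤ Real.exp (|lam| * t) := by
        apply Real.exp_le_exp.2
        have h1 : -lam * s ≤ |lam| * |s| := by
          calc -lam * s ≤ |(-lam) * s| := le_abs_self _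
          _ = |lam| * |s| := by rw [abs_mul, abs_neg]
        have h2 : |s| ≤ t := abs_le.2 ⟨by linarith, by linarith⟩
        nlinarith [abs_nonneg lam, abs_nonneg s]
      have hz : ‖Z (s + t)‖ ≤ max MZ 0 :=
        le_trans (hMZ _ ⟨by linarith, by linarith⟩) (le_max_left _ _)
      exact mul_le_mul he hz (norm_nonneg _) (Real.exp_pos _).le
    · push_neg at hst
      rw [hw₂ s hst.le]
      refine le_trans ?_ (le_max_right _ _)
      have he : Real.exp (-lam * s) = Real.exp (lam * t) * Real.exp (-lam * (s + t)) := by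
        rw [← Real.exp_add]; congr 1; ring
      rw [he, mul_assoc]
      exact mul_le_mul_of_nonneg_left (hw₀b (s + t) (by linarith)) (Real.exp_pos _).le
  -- continuity of the shifted nonlinearity along w
  have hwFc : ContinuousOn (fun σ => F (w σ).1 (w σ).2 (σ + t)) (Iic 0) :=
    hFc.comp_continuousOn ((continuous_fst.comp_continuousOn hwc).prodMk
      ((continuous_snd.comp_continuousOn hwc).prodMk ((continuous_id.add continuous_const).continuousOn)))
  have hwGc : ContinuousOn (fun σ => G (w σ).1 (w σ).2 (σ + t)) (Iic 0) :=
    hGc.comp_continuousOn ((continuous_fst.comp_continuousOn hwc).prodMk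
      ((continuous_snd.comp_continuousOn hwc).prodMk ((continuous_id.add continuous_const).continuousOn)))
  set g₀ : ℝ → Euc m := fun u => G (w₀ u).1 (w₀ u).2 u with hg₀def
  have hg₀c : ContinuousOn g₀ (Iic 0) :=
    hGc.comp_continuousOn ((continuous_fst.comp_continuousOn hw₀c).prodMk
      ((continuous_snd.comp_continuousOn hw₀c).prodMk continuousOn_id))
  obtain ⟨C₁, hC₁⟩ := hFG0 0
  have hg₀b : ∀ u ≤ (0:ℝ), ‖g₀ u‖ ≤ ((Lg : ℝ) * C₀ + C₁) * Real.exp (lam * u) := by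
    intro u hu
    have hexp1 : Real.exp (lam * u) * Real.exp (-lam * u) = 1 := by
      rw [← Real.exp_add]; norm_num
    have hw0n : ‖w₀ u‖ ≤ C₀ * Real.exp (lam * u) := by
      have h1 := hw₀b u hu
      have h2 := mul_le_mul_of_nonneg_left h1 (Real.exp_pos (lam * u)).le
      rw [← mul_assoc, hexp1, one_mul] at h2
      linarith [h2, mul_comm C₀ (Real.exp (lam * u))]
    have hG0 : ‖G 0 0 u‖ ≤ C₁ * Real.exp (lam * u) := by
      have h0 := hC₁ u hu
      simp only [add_zero] at h0
      have h1 : Real.exp (-lam * u) * ‖G 0 0 u‖ ≤ C₁ := by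
        nlinarith [norm_nonneg (F 0 0 u), (Real.exp_pos (-lam * u)).le]
      have h2 := mul_le_mul_of_nonneg_left h1 (Real.exp_pos (lam * u)).le
      rw [← mul_assoc, hexp1, one_mul] at h2
      linarith [mul_comm C₁ (Real.exp (lam * u))]
    have hlip := (hGl u).dist_le_mul (w₀ u) 0
    rw [dist_eq_norm, dist_zero_right] at hlip
    simp only [Prod.fst_zero, Prod.snd_zero] at hlip
    calc ‖g₀ u‖ = ‖(g₀ u - G 0 0 u) + G 0 0 u‖ := by rw [sub_add_cancel]
    _ ≤ ‖g₀ u - G 0 0 u‖ + ‖G 0 0 u‖ := norm_add_le _ _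
    _ ≤ (Lg : ℝ) * ‖w₀ u‖ + ‖G 0 0 u‖ := by exact add_le_add_left hlip _
    _ ≤ (Lg : ℝ) * (C₀ * Real.exp (lam * u)) + C₁ * Real.exp (lam * u) := by
        refine add_le_add (mul_le_mul_of_nonneg_left hw0n (Lg.coe_nonneg)) hG0
    _ = ((Lg : ℝ) * C₀ + C₁) * Real.exp (lam * u) := by ring
  have hlb : 0 < lam - β / ε := by
    have : β / ε < lam := (div_lt_iff₀ hε).2 (by linarith)
    linarith
  set K : ℝ := max ((Lg : ℝ) * C₀ + C₁) 0 with hKdef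
  have hK0 : 0 ≤ K := le_max_right _ _
  have hInt : ∀ d : ℝ, 0 ≤ d → IntegrableOn (fun u => expOp B ((d - u) / ε) (g₀ u)) (Iic 0) := by
    intro d hd
    apply Integrable.mono'
      (g := fun u => (Real.exp (β * d / ε) * K) * Real.exp ((lam - β / ε) * u))
    · exact ((integrableOn_exp_mul_Iic hlb 0).const_mul _)
    · refine ContinuousOn.aestronglyMeasurable ?_ measurableSet_Iic
      exact (((expOp_cont B).comp ((continuous_const.sub continuous_id).div_const ε)).continuousOn).clm_apply hg₀c
    · filter_upwards [ae_restrict_mem measurableSet_Iic] with u hu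
      have h1 : (0:ℝ) ≤ (d - u) / ε := by
        apply div_nonneg _ hε.le
        simp only [mem_Iic] at hu; linarith
      calc ‖expOp B ((d - u) / ε) (g₀ u)‖
          ≤ Real.exp (β * ((d - u) / ε)) * ‖g₀ u‖ := hB _ h1 _
      _ ≤ Real.exp (β * ((d - u) / ε)) * (K * Real.exp (lam * u)) := by
          refine mul_le_mul_of_nonneg_left ?_ (Real.exp_pos _).le
          exact le_trans (hg₀b u hu)
            (mul_le_mul_of_nonneg_right (le_max_left _ _) (Real.exp_pos _).le)
      _ = K * Real.exp (β * ((d - u) / ε) + lam * u) := by rw [Real.exp_add]; ring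
      _ = (Real.exp (β * d / ε) * K) * Real.exp ((lam - β / ε) * u) := by
          have h3 : β * ((d - u) / ε) + lam * u = β * d / ε + (lam - β / ε) * u := by
            field_simp; ring
          rw [h3, Real.exp_add]; ring
  have hfix : ∀ s ≤ (0:ℝ), w s = LPshift A B F G ε t (X t) w s := by
    intro s hs
    have hIcA : ContinuousOn (fun σ => expOp A (s - σ) (F (w σ).1 (w σ).2 (σ + t))) (Iic 0) :=
      (((expOp_cont A).comp (continuous_const.sub continuous_id)).continuousOn).clm_apply hwFc
    have hIcB : ContinuousOn (fun σ => expOp B ((s - σ) / ε) (G (w σ).1 (w σ).2 (σ + t))) (Iic 0) :=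
      (((expOp_cont B).comp ((continuous_const.sub continuous_id).div_const ε)).continuousOn).clm_apply hwGc
    by_cases hst : -t ≤ s
    · have hst' : 0 ≤ s + t := by linarith
      refine Prod.ext ?_ ?_
      · -- first component, recent past
        show (w s).1 = expOp A s (X t) + ∫ σ in (0:ℝ)..s, expOp A (s - σ) (F (w σ).1 (w σ).2 (σ + t))
        rw [hw₁ s hst]
        show X (s + t) = _
        set fA : ℝ → Euc n := fun r => expOp A (s + t - r) (F (X r) (Y r) r) with hfAdef
        have hsub : uIcc (s + t) t ⊆ Ici 0 := by
          rw [uIcc_of_le (by linarith)]; exact fun x hx => le_trans hst' hx.1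
        have hint' : IntervalIntegrable (fun r => expOp A (t - r) (F (X r) (Y r) r))
            volume (s + t) t :=
          (ContinuousOn.clm_apply
            (((expOp_cont A).comp (continuous_const.sub continuous_id)).continuousOn)
            (hFc.comp_continuousOn
              ((hXc.mono hsub).prodMk ((hYc.mono hsub).prodMk continuousOn_id)))).intervalIntegrable
        have e1 : expOp A s (X t) = X (s + t) + ∫ r in (s + t)..t, fA r := by
          rw [dX (s + t) t hst' (by linarith), map_add]
          congr 1
          · rw [← expOp_add, show s + (t - (s + t)) = 0 from by ring, expOp_zero]
            rfl
          · rw [← ContinuousLinearMap.intervalIntegral_comp_comm _ hint']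
            apply intervalIntegral.integral_congr
            intro r _
            show expOp A s (expOp A (t - r) (F (X r) (Y r) r)) = _
            rw [← expOp_add, show s + (t - r) = s + t - r from by ring]
        have hp : (∫ σ in (0:ℝ)..s, expOp A (s - σ) (F (w σ).1 (w σ).2 (σ + t)))
            = -(∫ r in (s + t)..t, fA r) := by
          rw [intervalIntegral.integral_congr (g := fun σ => fA (σ + t)) ?_,
            intervalIntegral.integral_comp_add_right fA t, zero_add,
            intervalIntegral.integral_symm]
          intro σ hσ
          rw [uIcc_of_ge hs] at hσ
          show expOp A (s - σ) (F (w σ).1 (w σ).2 (σ + t)) = fA (σ + t)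
          rw [hw₁ σ (le_trans hst hσ.1), hfAdef]
          show expOp A (s - σ) (F (X (σ + t)) (Y (σ + t)) (σ + t)) = _
          rw [show s - σ = s + t - (σ + t) from by ring]
        rw [e1, hp]
        abel
      · -- second component, recent past
        show (w s).2 = (1/ε) • ∫ σ in Iic s, expOp B ((s - σ) / ε) (G (w σ).1 (w σ).2 (σ + t))
        rw [hw₁ s hst]
        show Y (s + t) = _
        set fC : ℝ → Euc m := fun u => expOp B ((s + t - u) / ε) (g₀ u) with hfCdef
        set fD : ℝ → Euc m := fun r => expOp B ((s + t - r) / ε) (G (X r) (Y r) r) with hfDdef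
        have hEqtail : EqOn (fun σ => expOp B ((s - σ) / ε) (G (w σ).1 (w σ).2 (σ + t)))
            (fun σ => fC (σ + t)) (Iic (-t)) := by
          intro σ hσ
          simp only [mem_Iic] at hσ
          show expOp B ((s - σ) / ε) (G (w σ).1 (w σ).2 (σ + t)) = fC (σ + t)
          rw [hw₂ σ hσ, hfCdef]
          show expOp B ((s - σ) / ε) (G (w₀ (σ + t)).1 (w₀ (σ + t)).2 (σ + t)) = _
          rw [show s - σ = s + t - (σ + t) from by ring]
        have int1 : IntegrableOn
            (fun σ => expOp B ((s - σ) / ε) (G (w σ).1 (w σ).2 (σ + t))) (Iic (-t)) := by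
          have base : IntegrableOn fC (Iic (-t + t)) := by
            rw [show -t + t = 0 from by ring]; exact hInt (s + t) hst'
          exact (shiftIicInt base).congr_fun (fun σ hσ => (hEqtail hσ).symm) measurableSet_Iic
        have int2 : IntegrableOn
            (fun σ => expOp B ((s - σ) / ε) (G (w σ).1 (w σ).2 (σ + t))) (Ioc (-t) s) := by
          refine (ContinuousOn.integrableOn_compact isCompact_Icc ?_).mono_set Ioc_subset_Icc_self
          exact hIcB.mono fun x hx => le_trans hx.2 hs
        have hsplit : (∫ σ in Iic s, expOp B ((s - σ) / ε) (G (w σ).1 (w σ).2 (σ + t)))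
            = (∫ σ in Iic (-t), expOp B ((s - σ) / ε) (G (w σ).1 (w σ).2 (σ + t)))
              + ∫ σ in Ioc (-t) s, expOp B ((s - σ) / ε) (G (w σ).1 (w σ).2 (σ + t)) := by
          rw [← setIntegral_union (Iic_disjoint_Ioc le_rfl) measurableSet_Ioc int1 int2,
            Iic_union_Ioc_eq_Iic hst]
        have htail : (∫ σ in Iic (-t), expOp B ((s - σ) / ε) (G (w σ).1 (w σ).2 (σ + t)))
            = ∫ u in Iic 0, fC u := by
          rw [setIntegral_congr_fun measurableSet_Iic hEqtail, shiftIic fC (-t) t,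
            show -t + t = 0 from by ring]
        have htail2 : (1/ε) • (∫ u in Iic 0, fC u) = expOp B ((s + t) / ε) (Y 0) := by
          have hYw := congrArg Prod.snd (hw₀fix 0 le_rfl)
          simp only [LPshift, add_zero] at hYw
          have hfc : ∀ u : ℝ, fC u = expOp B ((s + t) / ε) (expOp B ((0 - u) / ε) (g₀ u)) := by
            intro u
            rw [hfCdef]
            show expOp B ((s + t - u) / ε) (g₀ u) = _
            rw [← expOp_add, show (s + t) / ε + (0 - u) / ε = (s + t - u) / ε from by ring]
          calc (1/ε) • (∫ u in Iic 0, fC u)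
              = (1/ε) • (∫ u in Iic 0, expOp B ((s + t) / ε) (expOp B ((0 - u) / ε) (g₀ u))) := by
                simp_rw [hfc]
          _ = (1/ε) • (expOp B ((s + t) / ε) (∫ u in Iic 0, expOp B ((0 - u) / ε) (g₀ u))) := by
                rw [ContinuousLinearMap.integral_comp_comm _ (hInt 0 le_rfl)]
          _ = expOp B ((s + t) / ε) ((1/ε) • ∫ u in Iic 0, expOp B ((0 - u) / ε) (g₀ u)) := by
                rw [_root_.map_smul]
          _ = expOp B ((s + t) / ε) ((w₀ 0).2) := by rw [← hYw]
          _ = expOp B ((s + t) / ε) (Y 0) := by rw [← hY0]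
        have hIoc : (∫ σ in Ioc (-t) s, expOp B ((s - σ) / ε) (G (w σ).1 (w σ).2 (σ + t)))
            = ∫ r in (0:ℝ)..(s + t), fD r := by
          rw [← intervalIntegral.integral_of_le hst,
            intervalIntegral.integral_congr (g := fun σ => fD (σ + t)) ?_,
            intervalIntegral.integral_comp_add_right fD t, show -t + t = 0 from by ring]
          intro σ hσ
          rw [uIcc_of_le hst] at hσ
          show expOp B ((s - σ) / ε) (G (w σ).1 (w σ).2 (σ + t)) = fD (σ + t)
          rw [hw₁ σ hσ.1, hfDdef]
          show expOp B ((s - σ) / ε) (G (X (σ + t)) (Y (σ + t)) (σ + t)) = _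
          rw [show s - σ = s + t - (σ + t) from by ring]
        rw [hsplit, smul_add, htail, htail2, hIoc, dY 0 (s + t) le_rfl hst', sub_zero]
    · push_neg at hst
      replace hst := hst.le
      refine Prod.ext ?_ ?_
      · -- first component, far past
        show (w s).1 = expOp A s (X t) + ∫ σ in (0:ℝ)..s, expOp A (s - σ) (F (w σ).1 (w σ).2 (σ + t))
        have hfix1 := congrArg Prod.fst (hw₀fix (s + t) (by linarith))
        simp only [LPshift, add_zero] at hfix1
        set fA : ℝ → Euc n := fun r => expOp A (s + t - r) (F (X r) (Y r) r) with hfAdef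
        set fB : ℝ → Euc n := fun u => expOp A (s + t - u) (F (w₀ u).1 (w₀ u).2 u) with hfBdef
        have hsub : uIcc (0:ℝ) t ⊆ Ici 0 := by rw [uIcc_of_le ht]; exact fun x hx => hx.1
        have hintF0t : IntervalIntegrable (fun r => expOp A (t - r) (F (X r) (Y r) r)) volume 0 t :=
          (ContinuousOn.clm_apply
            (((expOp_cont A).comp (continuous_const.sub continuous_id)).continuousOn)
            (hFc.comp_continuousOn
              ((hXc.mono hsub).prodMk ((hYc.mono hsub).prodMk continuousOn_id)))).intervalIntegrable
        have e1 : expOp A s (X t) = expOp A (s + t) (X 0) + ∫ r in (0:ℝ)..t, fA r := by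
          rw [dX 0 t le_rfl ht, map_add]
          congr 1
          · rw [← expOp_add, show s + (t - 0) = s + t from by ring]
          · rw [← ContinuousLinearMap.intervalIntegral_comp_comm _ hintF0t]
            apply intervalIntegral.integral_congr
            intro r _
            show expOp A s (expOp A (t - r) (F (X r) (Y r) r)) = _
            rw [← expOp_add, show s + (t - r) = s + t - r from by ring]
        have hI1 : IntervalIntegrable
            (fun σ => expOp A (s - σ) (F (w σ).1 (w σ).2 (σ + t))) volume 0 (-t) := by
          apply ContinuousOn.intervalIntegrable
          apply hIcA.mono
          rw [uIcc_of_ge (neg_nonpos.mpr ht)]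
          exact fun x hx => hx.2
        have hI2 : IntervalIntegrable
            (fun σ => expOp A (s - σ) (F (w σ).1 (w σ).2 (σ + t))) volume (-t) s := by
          apply ContinuousOn.intervalIntegrable
          apply hIcA.mono
          rw [uIcc_of_ge hst]
          exact fun x hx => le_trans hx.2 (by linarith)
        have hp1 : (∫ σ in (0:ℝ)..(-t), expOp A (s - σ) (F (w σ).1 (w σ).2 (σ + t)))
            = -(∫ r in (0:ℝ)..t, fA r) := by
          rw [intervalIntegral.integral_congr (g := fun σ => fA (σ + t)) ?_,
            intervalIntegral.integral_comp_add_right fA t, zero_add,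
            show -t + t = 0 from by ring, intervalIntegral.integral_symm]
          intro σ hσ
          rw [uIcc_of_ge (neg_nonpos.mpr ht)] at hσ
          show expOp A (s - σ) (F (w σ).1 (w σ).2 (σ + t)) = fA (σ + t)
          rw [hw₁ σ hσ.1, hfAdef]
          show expOp A (s - σ) (F (X (σ + t)) (Y (σ + t)) (σ + t)) = _
          rw [show s - σ = s + t - (σ + t) from by ring]
        have hp2 : (∫ σ in (-t)..s, expOp A (s - σ) (F (w σ).1 (w σ).2 (σ + t)))
            = ∫ u in (0:ℝ)..(s + t), fB u := by
          rw [intervalIntegral.integral_congr (g := fun σ => fB (σ + t)) ?_,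
            intervalIntegral.integral_comp_add_right fB t,
            show -t + t = 0 from by ring]
          intro σ hσ
          rw [uIcc_of_ge hst] at hσ
          show expOp A (s - σ) (F (w σ).1 (w σ).2 (σ + t)) = fB (σ + t)
          rw [hw₂ σ hσ.2, hfBdef]
          show expOp A (s - σ) (F (w₀ (σ + t)).1 (w₀ (σ + t)).2 (σ + t)) = _
          rw [show s - σ = s + t - (σ + t) from by ring]
        rw [hw₂ s hst, hfix1, e1,
          ← intervalIntegral.integral_add_adjacent_intervals hI1 hI2, hp1, hp2]
        abel
      · -- second component, far past
        show (w s).2 = (1/ε) • ∫ σ in Iic s, expOp B ((s - σ) / ε) (G (w σ).1 (w σ).2 (σ + t))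
        have hfix2 := congrArg Prod.snd (hw₀fix (s + t) (by linarith))
        simp only [LPshift, add_zero] at hfix2
        rw [hw₂ s hst, hfix2]
        congr 1
        have hcong : (∫ σ in Iic s, expOp B ((s - σ) / ε) (G (w σ).1 (w σ).2 (σ + t)))
            = ∫ σ in Iic s,
              (fun u => expOp B ((s + t - u) / ε) (G (w₀ u).1 (w₀ u).2 u)) (σ + t) := by
          refine setIntegral_congr_fun measurableSet_Iic fun σ hσ => ?_
          simp only [mem_Iic] at hσ
          show expOp B ((s - σ) / ε) (G (w σ).1 (w σ).2 (σ + t)) = _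
          rw [hw₂ σ (le_trans hσ hst), show s - σ = s + t - (σ + t) from by ring]
        rw [hcong, shiftIic (fun u => expOp B ((s + t - u) / ε) (G (w₀ u).1 (w₀ u).2 u)) s t]
  refine ⟨w, ⟨⟨hwc, hbound⟩, hfix⟩, ?_⟩
  rw [hw₁ 0 (by linarith)]
  simp [hZdef]
end
end

section
/- For every R > 0 there exists a constant C = C(R) > 0, independent of ε, such that for all ε ∈ (0,1] and all X ∈ ℝⁿ with ‖X‖ ≤ R, the graph maps satisfy ‖hᵋ(X) − h⁰(X)‖ ≤ C ε, where hᵋ(X) := Ȳᵋ(0) and h⁰(X) := Ȳ_X(0). (That is, hᵋ(X) = h⁰(X) + O(ε) as ε → 0, uniformly for X in bounded subsets of ℝⁿ.) -/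
open MeasureTheory Set

set_option maxHeartbeats 4000000

noncomputable section

lemma myIntExpMul (c : ℝ) (hc : c ≠ 0) (a b : ℝ) :
    ∫ x in a..b, Real.exp (c*x) = (Real.exp (c*b) - Real.exp (c*a))/c := by
  have h : ∀ x ∈ Set.uIcc a b, HasDerivAt (fun y => Real.exp (c*y)/c) (Real.exp (c*x)) x := by
    intro x _
    have h1 : HasDerivAt (fun y : ℝ => c*y) c x := by
      simpa using (hasDerivAt_id x).const_mul c
    have := ((Real.hasDerivAt_exp (c*x)).comp x h1).div_const c
    rw [mul_div_cancel_right₀ _ hc] at this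
    exact this
  rw [intervalIntegral.integral_eq_sub_of_hasDerivAt h
    ((Real.continuous_exp.comp (continuous_const.mul continuous_id)).intervalIntegrable a b)]
  ring

lemma myIntegrableOn_exp_mul_Iic {c : ℝ} (hc : 0 < c) (t : ℝ) :
    IntegrableOn (fun s => Real.exp (c*s)) (Set.Iic t) := by
  refine integrableOn_Iic_of_intervalIntegral_norm_bounded (Real.exp (c*t)/c) t
    (fun y => ((Real.continuous_exp.comp (continuous_const.mul continuous_id)).integrableOn_Ioc))
    Filter.tendsto_id (Filter.eventually_of_mem (Filter.Iic_mem_atBot t) fun y hy => ?_)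
  simp only [id_eq, Real.norm_eq_abs, Real.abs_exp, myIntExpMul c hc.ne' y t]
  have h3 := (Real.exp_pos (c*y)).le
  gcongr
  linarith

lemma myIntegral_exp_mul_Iic {c : ℝ} (hc : 0 < c) (t : ℝ) :
    ∫ s in Set.Iic t, Real.exp (c*s) = Real.exp (c*t)/c := by
  refine tendsto_nhds_unique
    (intervalIntegral_tendsto_integral_Iic _ (myIntegrableOn_exp_mul_Iic hc t) Filter.tendsto_id) ?_
  have h2 : Filter.Tendsto (fun y : ℝ => (Real.exp (c*t) - Real.exp (c*y))/c) Filter.atBot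
      (nhds ((Real.exp (c*t) - 0)/c)) := by
    apply Filter.Tendsto.div_const
    apply Filter.Tendsto.const_sub
    exact Real.tendsto_exp_atBot.comp (Filter.Tendsto.const_mul_atBot hc Filter.tendsto_id)
  simp only [sub_zero] at h2
  simpa only [myIntExpMul c hc.ne', id_eq] using h2

lemma myExpDiff {k : ℕ} (A : Euc k →L[ℝ] Euc k) (α : ℝ) (hα : 0 ≤ α)
    (hA : ∀ t ≤ (0:ℝ), ∀ x : Euc k, ‖expOp A t x‖ ≤ Real.exp (α * t) * ‖x‖)
    (X : Euc k) (R : ℝ) (hX : ‖X‖ ≤ R) (r : ℝ) (hr : r ≤ 0) :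
    ‖expOp A r X - X‖ ≤ (‖A‖*R)*(-r) := by
  have hexple : ∀ x : ℝ, x ≤ 0 → Real.exp x ≤ 1 := fun x hx => by
    simpa using Real.exp_le_exp.mpr hx
  have hder : ∀ τ ∈ Icc r (0:ℝ), HasDerivWithinAt (fun τ => expOp A τ X)
      ((fun τ => expOp A τ (A X)) τ) (Icc r 0) τ := by
    intro τ hτ
    have h1 : HasDerivAt (fun τ : ℝ => NormedSpace.exp (τ • A))
        (NormedSpace.exp (τ • A) * A) τ := hasDerivAt_exp_smul_const A τ
    have h2 := h1.clm_apply (hasDerivAt_const τ X)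
    have h3 : HasDerivAt (fun τ => expOp A τ X) (expOp A τ (A X)) τ := by
      simpa [expOp, ContinuousLinearMap.mul_apply] using h2
    exact h3.hasDerivWithinAt
  have hbnd : ∀ τ ∈ Icc r (0:ℝ), ‖expOp A τ (A X)‖ ≤ ‖A‖*R := by
    intro τ hτ
    have h1 := hA τ hτ.2 (A X)
    have h2 : Real.exp (α*τ) ≤ 1 := hexple _ (mul_nonpos_of_nonneg_of_nonpos hα hτ.2)
    have h3 : ‖A X‖ ≤ ‖A‖*‖X‖ := A.le_opNorm X
    nlinarith [norm_nonneg (A X), Real.exp_pos (α*τ), norm_nonneg A, norm_nonneg X]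
  have h4 := Convex.norm_image_sub_le_of_norm_hasDerivWithin_le hder hbnd (convex_Icc _ _)
    (⟨le_rfl, hr⟩ : r ∈ Icc r (0:ℝ)) (⟨hr, le_rfl⟩ : (0:ℝ) ∈ Icc r (0:ℝ))
  have hf0 : expOp A 0 X = X := by
    rw [expOp, show (0:ℝ) • A = 0 from zero_smul ℝ A, NormedSpace.exp_zero,
      ContinuousLinearMap.one_apply]
  rw [hf0, show (0:ℝ) - r = -r by ring, norm_neg] at h4
  calc ‖expOp A r X - X‖ = ‖X - expOp A r X‖ := (norm_sub_rev _ _)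
    _ ≤ ‖A‖*R*‖r‖ := h4
    _ = (‖A‖*R)*(-r) := by rw [Real.norm_eq_abs, abs_of_nonpos hr]

/-- Uniformly for `‖X‖ ≤ R`, the graph maps satisfy
`‖hᵋ(X) - h⁰(X)‖ ≤ C ε` with `C = C(R)` independent of `ε ∈ (0,1]`; here `hᵋ(X) = Ȳᵋ(0)` comes
from the slow-time Lyapunov–Perron fixed point and `h⁰(X) = Ȳ_X(0)` from the unique bounded
continuous solution of the frozen fast integral equation. -/
theorem graphMap_approximation
    {n m : ℕ} (A : Euc n →L[ℝ] Euc n) (B : Euc m →L[ℝ] Euc m)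
    (α β : ℝ) (hα : 0 ≤ α) (hβ : β < 0)
    (hA : ∀ t ≤ (0:ℝ), ∀ x : Euc n, ‖expOp A t x‖ ≤ Real.exp (α * t) * ‖x‖)
    (hB : ∀ t ≥ (0:ℝ), ∀ y : Euc m, ‖expOp B t y‖ ≤ Real.exp (β * t) * ‖y‖)
    (F : Euc n → Euc m → ℝ → Euc n) (G : Euc n → Euc m → ℝ → Euc m)
    (Lf Lg : NNReal)
    (hFc : Continuous fun p : Euc n × Euc m × ℝ => F p.1 p.2.1 p.2.2)
    (hGc : Continuous fun p : Euc n × Euc m × ℝ => G p.1 p.2.1 p.2.2)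
    (hFl : ∀ t : ℝ, LipschitzWith Lf fun p : Euc n × Euc m => F p.1 p.2 t)
    (hGl : ∀ t : ℝ, LipschitzWith Lg fun p : Euc n × Euc m => G p.1 p.2 t)
    (M : ℝ) (hM : ∀ t ≤ (0:ℝ), ‖F 0 0 t‖ + ‖G 0 0 t‖ ≤ M)
    (lam : ℝ) (hlam : 0 < lam)
    (hlamα : ∀ ε : ℝ, 0 < ε → ε ≤ 1 → ε * lam < α)
    (hgap : (Lf : ℝ) / (α - lam) + (Lg : ℝ) / (-β) < 1)
    : ∀ R > (0:ℝ), ∃ C > (0:ℝ), ∀ ε : ℝ, 0 < ε → ε ≤ 1 →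
      ∀ X₀ : Euc n, ‖X₀‖ ≤ R →
      ∀ u : ℝ → Euc n × Euc m, memCm (ε * lam) u →
        (∀ t ≤ (0:ℝ),
          (u t).1 = expOp A (ε * t) X₀ + ε • ∫ s in (0:ℝ)..t,
            expOp A (ε * (t - s)) (F (u s).1 (u s).2 s) ∧
          (u t).2 = ∫ s in Set.Iic t, expOp B (t - s) (G (u s).1 (u s).2 s)) →
        ∀ Ybar : ℝ → Euc m, ContinuousOn Ybar (Set.Iic 0) →
          (∃ K : ℝ, ∀ t ≤ (0:ℝ), ‖Ybar t‖ ≤ K) →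
          (∀ t ≤ (0:ℝ), Ybar t = ∫ s in Set.Iic t, expOp B (t - s) (G X₀ (Ybar s) s)) →
          ‖(u 0).2 - Ybar 0‖ ≤ C * ε := by
  intro R hR
  have hβ' : (0:ℝ) < -β := by linarith
  have hM0 : (0:ℝ) ≤ M := le_trans (by positivity) (hM 0 le_rfl)
  have hαlam : lam < α := by simpa using hlamα 1 one_pos le_rfl
  have hα0 : (0:ℝ) < α := lt_trans hlam hαlam
  have hαl' : (0:ℝ) < α - lam := by linarith
  have hLf0 : (0:ℝ) ≤ (Lf:ℝ) := Lf.coe_nonneg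
  have hLg0 : (0:ℝ) ≤ (Lg:ℝ) := Lg.coe_nonneg
  have hexple : ∀ x : ℝ, x ≤ 0 → Real.exp x ≤ 1 := fun x hx => by
    simpa using Real.exp_le_exp.mpr hx
  have hLgβ : (Lg:ℝ) < -β := by
    have h1 : (0:ℝ) ≤ (Lf:ℝ)/(α-lam) := by positivity
    have h2 : (Lg:ℝ)/(-β) < 1 := by linarith
    have := (div_lt_one hβ').mp h2
    linarith
  have hθ0 : (0:ℝ) ≤ (Lf:ℝ)/(α-lam) + (Lg:ℝ)/(-β) := by positivity
  have hθ1 : (0:ℝ) < 1 - ((Lf:ℝ)/(α-lam) + (Lg:ℝ)/(-β)) := by linarith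
  set θ : ℝ := (Lf:ℝ)/(α-lam) + (Lg:ℝ)/(-β) with hθdef
  set ν : ℝ := (-β - Lg)/2 with hνdef
  have hν0 : (0:ℝ) < ν := by rw [hνdef]; linarith
  have hbν : (0:ℝ) < -β - ν := by rw [hνdef]; linarith
  have hνid : -β - ν - Lg = ν := by rw [hνdef]; ring
  set a0 : ℝ := R + M/α + M/(-β) with ha0def
  have ha00 : (0:ℝ) < a0 := by positivity
  set P₀ : ℝ := a0/(1-θ) with hP₀def
  have hP₀0 : (0:ℝ) < P₀ := div_pos ha00 hθ1
  set K₁ : ℝ := ‖A‖*R + (M + Lf*P₀) with hK₁def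
  have hK₁0 : (0:ℝ) ≤ K₁ := by positivity
  clear_value θ ν a0 P₀ K₁
  refine ⟨(Lg:ℝ)*K₁/ν^2 + 1, by
    have h1 : (0:ℝ) ≤ (Lg:ℝ)*K₁/ν^2 := div_nonneg (mul_nonneg hLg0 hK₁0) (by positivity)
    linarith, ?_⟩
  intro ε hε hε1 X₀ hX₀ u hu hueq Ybar hYc hYb hYeq
  obtain ⟨Cu, hCu⟩ := hu.2
  obtain ⟨K, hK⟩ := hYb
  have cu : ContinuousOn u (Iic 0) := hu.1
  have hK0 : (0:ℝ) ≤ K := le_trans (norm_nonneg _) (hK 0 le_rfl)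
  have hCu' : ∀ t ≤ (0:ℝ), ‖u t‖ ≤ Cu := by
    intro t ht
    have h1 : (1:ℝ) ≤ Real.exp (-(ε*lam)*t) := Real.one_le_exp (by nlinarith [mul_pos hε hlam])
    nlinarith [hCu t ht, norm_nonneg (u t)]
  -- norm bounds on F and G
  have hFn : ∀ x y, ∀ s ≤ (0:ℝ), ‖F x y s‖ ≤ M + Lf * ‖(x, y)‖ := by
    intro x y s hs
    have h1 := (hFl s).dist_le_mul (x, y) 0
    rw [dist_eq_norm, dist_zero_right] at h1
    have h2 := hM s hs
    have h3 := norm_nonneg (G 0 0 s)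
    have h4 := norm_sub_norm_le (F x y s) (F 0 0 s)
    simp only [Prod.fst_zero, Prod.snd_zero] at h1
    linarith
  have hGn : ∀ x y, ∀ s ≤ (0:ℝ), ‖G x y s‖ ≤ M + Lg * ‖(x, y)‖ := by
    intro x y s hs
    have h1 := (hGl s).dist_le_mul (x, y) 0
    rw [dist_eq_norm, dist_zero_right] at h1
    have h2 := hM s hs
    have h3 := norm_nonneg (F 0 0 s)
    have h4 := norm_sub_norm_le (G x y s) (G 0 0 s)
    simp only [Prod.fst_zero, Prod.snd_zero] at h1
    linarith
  -- the sup of ‖u‖ on (-∞,0]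
  have hSPne : ((fun t => ‖u t‖) '' (Iic 0)).Nonempty := ⟨‖u 0‖, 0, mem_Iic.mpr le_rfl, rfl⟩
  have hSPb : BddAbove ((fun t => ‖u t‖) '' (Iic 0)) :=
    ⟨Cu, by rintro x ⟨t, ht, rfl⟩; exact hCu' t (mem_Iic.mp ht)⟩
  set P : ℝ := sSup ((fun t => ‖u t‖) '' (Iic 0)) with hPdef
  have hPub : ∀ t ≤ (0:ℝ), ‖u t‖ ≤ P := fun t ht => le_csSup hSPb ⟨t, mem_Iic.mpr ht, rfl⟩
  clear_value P
  have hP0 : (0:ℝ) ≤ P := le_trans (norm_nonneg _) (hPub 0 le_rfl)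
  have hFub : ∀ s ≤ (0:ℝ), ‖F (u s).1 (u s).2 s‖ ≤ M + Lf * P := by
    intro s hs
    have h1 := hFn (u s).1 (u s).2 s hs
    rw [Prod.mk.eta] at h1
    have h2 := mul_le_mul_of_nonneg_left (hPub s hs) hLf0
    linarith
  have hGub : ∀ s ≤ (0:ℝ), ‖G (u s).1 (u s).2 s‖ ≤ M + Lg * P := by
    intro s hs
    have h1 := hGn (u s).1 (u s).2 s hs
    rw [Prod.mk.eta] at h1
    have h2 := mul_le_mul_of_nonneg_left (hPub s hs) hLg0
    linarith
  -- continuity facts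
  have hexpA : Continuous (expOp A) := by
    unfold expOp
    exact continuous_iff_continuousAt.2 fun t => (hasDerivAt_exp_smul_const A t).continuousAt
  have hexpB : Continuous (expOp B) := by
    unfold expOp
    exact continuous_iff_continuousAt.2 fun t => (hasDerivAt_exp_smul_const B t).continuousAt
  have hFcont : ContinuousOn (fun s => F (u s).1 (u s).2 s) (Iic (0:ℝ)) := by
    have h1 : ContinuousOn (fun s : ℝ => ((u s).1, ((u s).2, s))) (Iic 0) :=
      (cu.fst).prodMk ((cu.snd).prodMk continuousOn_id)
    exact hFc.comp_continuousOn h1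
  have hGcont : ContinuousOn (fun s => G (u s).1 (u s).2 s) (Iic (0:ℝ)) := by
    have h1 : ContinuousOn (fun s : ℝ => ((u s).1, ((u s).2, s))) (Iic 0) :=
      (cu.fst).prodMk ((cu.snd).prodMk continuousOn_id)
    exact hGc.comp_continuousOn h1
  have hGYcont : ContinuousOn (fun s => G X₀ (Ybar s) s) (Iic (0:ℝ)) := by
    have h1 : ContinuousOn (fun s : ℝ => (X₀, (Ybar s, s))) (Iic 0) :=
      continuousOn_const.prodMk (hYc.prodMk continuousOn_id)
    exact hGc.comp_continuousOn h1
  -- integrability of fast integrands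
  have hYint : ∀ Cb : ℝ, ∀ v : ℝ → Euc m, ContinuousOn v (Iic 0) →
      (∀ s ≤ (0:ℝ), ‖v s‖ ≤ Cb) →
      ∀ t ≤ (0:ℝ), IntegrableOn (fun s => expOp B (t-s) (v s)) (Iic t) := by
    intro Cb v hvc hvb t ht
    have hsub : Iic t ⊆ Iic (0:ℝ) := Iic_subset_Iic.mpr ht
    have hcont : ContinuousOn (fun s => expOp B (t-s) (v s)) (Iic t) := by
      apply ContinuousOn.clm_apply
      · exact (hexpB.comp (continuous_const.sub continuous_id)).continuousOn
      · exact hvc.mono hsub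
    refine Integrable.mono' ((myIntegrableOn_exp_mul_Iic hβ' t).const_mul (Cb * Real.exp (β*t)))
      (hcont.aestronglyMeasurable measurableSet_Iic)
      (ae_restrict_of_forall_mem measurableSet_Iic ?_)
    intro s hs
    have hst : s ≤ t := mem_Iic.mp hs
    have h1 : (0:ℝ) ≤ t - s := by linarith
    calc ‖expOp B (t-s) (v s)‖ ≤ Real.exp (β*(t-s)) * ‖v s‖ := hB (t-s) h1 (v s)
      _ ≤ Real.exp (β*(t-s)) * Cb :=
          mul_le_mul_of_nonneg_left (hvb s (le_trans hst ht)) (Real.exp_pos _).le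
      _ = Cb * Real.exp (β*t) * Real.exp ((-β)*s) := by
          rw [show β*(t-s) = β*t + (-β)*s by ring, Real.exp_add]; ring
  have hYI1 : ∀ t ≤ (0:ℝ),
      IntegrableOn (fun s => expOp B (t-s) (G (u s).1 (u s).2 s)) (Iic t) :=
    hYint (M + Lg*P) _ hGcont hGub
  have hGYub : ∀ s ≤ (0:ℝ), ‖G X₀ (Ybar s) s‖ ≤ M + Lg*(R+K) := by
    intro s hs
    have h1 := hGn X₀ (Ybar s) s hs
    have h2 : ‖(X₀, Ybar s)‖ ≤ R + K := by
      rw [Prod.norm_def]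
      exact max_le (by linarith) (by linarith [hK s hs])
    nlinarith
  have hYI2 : ∀ t ≤ (0:ℝ),
      IntegrableOn (fun s => expOp B (t-s) (G X₀ (Ybar s) s)) (Iic t) :=
    hYint (M + Lg*(R+K)) _ hGYcont hGYub
  -- generic bound for fast integrals against weighted bounds
  have hYbnd : ∀ (c0 ν' : ℝ), 0 ≤ c0 → 0 < -β - ν' → ∀ t ≤ (0:ℝ), ∀ v : ℝ → Euc m,
      IntegrableOn (fun s => expOp B (t-s) (v s)) (Iic t) →
      (∀ s ≤ (0:ℝ), ‖v s‖ ≤ c0 * Real.exp ((-ν')*s)) →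
      ‖∫ s in Iic t, expOp B (t-s) (v s)‖ ≤ c0 * Real.exp ((-ν')*t) / (-β - ν') := by
    intro c0 ν' hc0 hbν' t ht v hvi hvb
    have he2 : Real.exp (β*t) * Real.exp ((-β-ν')*t) = Real.exp ((-ν')*t) := by
      rw [← Real.exp_add]; ring_nf
    calc ‖∫ s in Iic t, expOp B (t-s) (v s)‖
        ≤ ∫ s in Iic t, ‖expOp B (t-s) (v s)‖ := norm_integral_le_integral_norm _
      _ ≤ ∫ s in Iic t, (c0 * Real.exp (β*t)) * Real.exp ((-β-ν')*s) := by
          apply setIntegral_mono_on hvi.norm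
            ((myIntegrableOn_exp_mul_Iic hbν' t).const_mul _) measurableSet_Iic
          intro s hs
          have hst : s ≤ t := mem_Iic.mp hs
          have hs0 : s ≤ (0:ℝ) := le_trans hst ht
          have he : Real.exp (β*(t-s)) * Real.exp ((-ν')*s)
              = Real.exp (β*t) * Real.exp ((-β-ν')*s) := by
            rw [← Real.exp_add, ← Real.exp_add]; ring_nf
          calc ‖expOp B (t-s) (v s)‖ ≤ Real.exp (β*(t-s)) * ‖v s‖ := hB (t-s) (by linarith) (v s)
            _ ≤ Real.exp (β*(t-s)) * (c0 * Real.exp ((-ν')*s)) :=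
                mul_le_mul_of_nonneg_left (hvb s hs0) (Real.exp_pos _).le
            _ = (c0 * Real.exp (β*t)) * Real.exp ((-β-ν')*s) := by
                rw [show Real.exp (β*(t-s)) * (c0 * Real.exp ((-ν')*s))
                  = c0 * (Real.exp (β*(t-s)) * Real.exp ((-ν')*s)) by ring, he]
                ring
      _ = (c0 * Real.exp (β*t)) * (Real.exp ((-β-ν')*t) / (-β-ν')) := by
          rw [integral_const_mul, myIntegral_exp_mul_Iic hbν' t]
      _ = c0 * Real.exp ((-ν')*t) / (-β - ν') := by
          rw [show (c0 * Real.exp (β*t)) * (Real.exp ((-β-ν')*t) / (-β-ν'))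
            = c0 * (Real.exp (β*t) * Real.exp ((-β-ν')*t)) / (-β-ν') by ring, he2]
  -- a priori bound on the Y-component
  have hYbound : ∀ t ≤ (0:ℝ), ‖(u t).2‖ ≤ (M + Lg*P)/(-β) := by
    intro t ht
    rw [(hueq t ht).2]
    have h1 := hYbnd (M + Lg*P) 0 (add_nonneg hM0 (mul_nonneg hLg0 hP0)) (by simpa using hβ') t ht _
      (hYI1 t ht) (by intro s hs; simpa using hGub s hs)
    simpa using h1
  -- a priori bound on the X-component
  have hXbound : ∀ t ≤ (0:ℝ), ‖(u t).1‖ ≤ R + (M + Lf*P)/α := by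
    intro t ht
    have hIi : IntervalIntegrable
        (fun σ => expOp A (ε*(t-σ)) (F (u σ).1 (u σ).2 σ)) volume t 0 := by
      apply ContinuousOn.intervalIntegrable
      apply ContinuousOn.clm_apply
      · exact (hexpA.comp (continuous_const.mul (continuous_const.sub continuous_id))).continuousOn
      · exact hFcont.mono (by rw [uIcc_of_le ht]; exact Icc_subset_Iic_self)
    have hc : α*ε ≠ 0 := by positivity
    have h2 : ‖∫ σ in t..(0:ℝ), expOp A (ε*(t-σ)) (F (u σ).1 (u σ).2 σ)‖
        ≤ (M+Lf*P)*((1 - Real.exp (α*ε*t))/(α*ε)) := by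
      calc ‖∫ σ in t..(0:ℝ), expOp A (ε*(t-σ)) (F (u σ).1 (u σ).2 σ)‖
          ≤ ∫ σ in t..(0:ℝ), ‖expOp A (ε*(t-σ)) (F (u σ).1 (u σ).2 σ)‖ :=
            intervalIntegral.norm_integral_le_integral_norm ht
        _ ≤ ∫ σ in t..(0:ℝ), ((M+Lf*P)*Real.exp (α*ε*t)) * Real.exp ((-(α*ε))*σ) := by
            apply intervalIntegral.integral_mono_on ht hIi.norm
              ((continuous_const.mul
                (Real.continuous_exp.comp (continuous_const.mul continuous_id))).intervalIntegrable _ _)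
            intro σ hσ
            obtain ⟨hσ1, hσ2⟩ := hσ
            calc ‖expOp A (ε*(t-σ)) (F (u σ).1 (u σ).2 σ)‖
                ≤ Real.exp (α*(ε*(t-σ))) * ‖F (u σ).1 (u σ).2 σ‖ :=
                    hA _ (mul_nonpos_of_nonneg_of_nonpos hε.le (by linarith)) _
              _ ≤ Real.exp (α*(ε*(t-σ))) * (M+Lf*P) :=
                  mul_le_mul_of_nonneg_left (hFub σ hσ2) (Real.exp_pos _).le
              _ = ((M+Lf*P)*Real.exp (α*ε*t)) * Real.exp ((-(α*ε))*σ) := by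
                  rw [show α*(ε*(t-σ)) = α*ε*t + (-(α*ε))*σ by ring, Real.exp_add]; ring
        _ = ((M+Lf*P)*Real.exp (α*ε*t))
              * ((Real.exp ((-(α*ε))*0) - Real.exp ((-(α*ε))*t))/(-(α*ε))) := by
            rw [intervalIntegral.integral_const_mul, myIntExpMul _ (by simpa using hc)]
        _ = (M+Lf*P)*((1 - Real.exp (α*ε*t))/(α*ε)) := by
            rw [mul_zero, Real.exp_zero, show (-(α*ε))*t = -(α*ε*t) by ring, Real.exp_neg]
            have hne := Real.exp_ne_zero (α*ε*t)
            field_simp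
            ring
    rw [(hueq t ht).1]
    have h3 : ‖expOp A (ε*t) X₀‖ ≤ R := by
      have hεt : ε*t ≤ 0 := mul_nonpos_of_nonneg_of_nonpos hε.le ht
      have h4 := hA (ε*t) hεt X₀
      have h5 : Real.exp (α*(ε*t)) ≤ 1 := hexple _ (mul_nonpos_of_nonneg_of_nonpos hα hεt)
      nlinarith [norm_nonneg X₀, Real.exp_pos (α*(ε*t))]
    have h6 : ‖∫ s in (0:ℝ)..t, expOp A (ε*(t-s)) (F (u s).1 (u s).2 s)‖
        ≤ (M+Lf*P)*((1 - Real.exp (α*ε*t))/(α*ε)) := by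
      rw [intervalIntegral.integral_symm t 0, norm_neg]; exact h2
    have he := (Real.exp_pos (α*ε*t)).le
    have hMP : (0:ℝ) ≤ M + Lf*P := add_nonneg hM0 (mul_nonneg hLf0 hP0)
    calc ‖expOp A (ε*t) X₀ + ε • ∫ s in (0:ℝ)..t, expOp A (ε*(t-s)) (F (u s).1 (u s).2 s)‖
        ≤ ‖expOp A (ε*t) X₀‖ + ‖ε • ∫ s in (0:ℝ)..t, expOp A (ε*(t-s)) (F (u s).1 (u s).2 s)‖ :=
          norm_add_le _ _
      _ ≤ R + ε * ((M+Lf*P)*((1 - Real.exp (α*ε*t))/(α*ε))) := by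
          rw [norm_smul, Real.norm_of_nonneg hε.le]
          exact add_le_add h3 (mul_le_mul_of_nonneg_left h6 hε.le)
      _ ≤ R + (M + Lf*P)/α := by
          have heq : ε * ((M+Lf*P)*((1 - Real.exp (α*ε*t))/(α*ε)))
              = (M+Lf*P)*(1 - Real.exp (α*ε*t))/α := by
            field_simp
          rw [heq]
          have h7 : (M+Lf*P)*(1 - Real.exp (α*ε*t)) ≤ M+Lf*P := by nlinarith
          have := (div_le_div_iff_of_pos_right hα0).mpr h7
          linarith [(div_le_div_iff_of_pos_right hα0).mpr h7]
  -- uniform bound on ‖u‖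
  have hPle : P ≤ a0 + ((Lf:ℝ)/α + (Lg:ℝ)/(-β))*P := by
    conv_lhs => rw [hPdef]
    apply csSup_le hSPne
    rintro x ⟨t, ht', rfl⟩
    dsimp only
    have ht : t ≤ (0:ℝ) := mem_Iic.mp ht'
    have h1 := hXbound t ht
    have h2 := hYbound t ht
    have e1 : (M + Lf*P)/α = M/α + (Lf/α)*P := by ring
    have e2 : (M + Lg*P)/(-β) = M/(-β) + ((Lg:ℝ)/(-β))*P := by ring
    have d1 : (0:ℝ) ≤ M/(-β) := by positivity
    have d2 : (0:ℝ) ≤ ((Lg:ℝ)/(-β))*P := mul_nonneg (div_nonneg hLg0 hβ'.le) hP0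
    have d3 : (0:ℝ) ≤ M/α := by positivity
    have d4 : (0:ℝ) ≤ ((Lf:ℝ)/α)*P := mul_nonneg (div_nonneg hLf0 hα0.le) hP0
    have : ‖u t‖ = max ‖(u t).1‖ ‖(u t).2‖ := Prod.norm_def (u t)
    rw [this, ha0def]
    apply max_le
    · rw [e1] at h1; linarith
    · rw [e2] at h2; linarith
  have hPP : P ≤ P₀ := by
    have hcc : (Lf:ℝ)/α + (Lg:ℝ)/(-β) ≤ θ := by
      have h1 : (Lf:ℝ)/α ≤ (Lf:ℝ)/(α-lam) := by
        apply div_le_div_of_nonneg_left hLf0 hαl'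
        linarith
      rw [hθdef]; linarith
    rw [hP₀def, le_div_iff₀ hθ1]
    have h2 : P - θ*P ≤ a0 := by nlinarith [mul_le_mul_of_nonneg_right hcc hP0, hPle]
    have h3 : P*(1-θ) = P - θ*P := by ring
    linarith
  have hFub₀ : ∀ s ≤ (0:ℝ), ‖F (u s).1 (u s).2 s‖ ≤ M + Lf*P₀ := by
    intro s hs
    have := hFub s hs
    nlinarith [mul_le_mul_of_nonneg_left hPP hLf0]
  -- the key O(ε) estimate for the slow component
  have hx : ∀ s ≤ (0:ℝ), ‖(u s).1 - X₀‖ ≤ ε*K₁*(-s) := by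
    intro s hs
    have hεs : ε*s ≤ 0 := mul_nonpos_of_nonneg_of_nonpos hε.le hs
    have hmvt : ‖expOp A (ε*s) X₀ - X₀‖ ≤ (‖A‖*R)*(ε*(-s)) := by
      have := myExpDiff A α hα hA X₀ R hX₀ (ε*s) hεs
      calc ‖expOp A (ε*s) X₀ - X₀‖ ≤ (‖A‖*R)*(-(ε*s)) := this
        _ = (‖A‖*R)*(ε*(-s)) := by ring
    have hI : ‖∫ σ in (0:ℝ)..s, expOp A (ε*(s-σ)) (F (u σ).1 (u σ).2 σ)‖
        ≤ (M+Lf*P₀)*|s - 0| := by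
      apply intervalIntegral.norm_integral_le_of_norm_le_const
      intro σ hσ
      rw [Set.uIoc_comm, Set.uIoc_of_le hs] at hσ
      obtain ⟨hσ1, hσ2⟩ := hσ
      have hsσ : ε*(s-σ) ≤ 0 := mul_nonpos_of_nonneg_of_nonpos hε.le (by linarith)
      have h5 : Real.exp (α*(ε*(s-σ))) ≤ 1 :=
        hexple _ (mul_nonpos_of_nonneg_of_nonpos hα hsσ)
      calc ‖expOp A (ε*(s-σ)) (F (u σ).1 (u σ).2 σ)‖
          ≤ Real.exp (α*(ε*(s-σ))) * ‖F (u σ).1 (u σ).2 σ‖ := hA _ hsσ _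
        _ ≤ M+Lf*P₀ := by
            nlinarith [hFub₀ σ hσ2, norm_nonneg (F (u σ).1 (u σ).2 σ), Real.exp_pos (α*(ε*(s-σ)))]
    have hrw : expOp A (ε*s) X₀
        + ε • (∫ σ in (0:ℝ)..s, expOp A (ε*(s-σ)) (F (u σ).1 (u σ).2 σ)) - X₀
        = (expOp A (ε*s) X₀ - X₀)
          + ε • (∫ σ in (0:ℝ)..s, expOp A (ε*(s-σ)) (F (u σ).1 (u σ).2 σ)) := by abel
    rw [(hueq s hs).1, hrw]
    calc ‖(expOp A (ε*s) X₀ - X₀)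
          + ε • (∫ σ in (0:ℝ)..s, expOp A (ε*(s-σ)) (F (u σ).1 (u σ).2 σ))‖
        ≤ ‖expOp A (ε*s) X₀ - X₀‖
          + ‖ε • (∫ σ in (0:ℝ)..s, expOp A (ε*(s-σ)) (F (u σ).1 (u σ).2 σ))‖ := norm_add_le _ _
      _ ≤ (‖A‖*R)*(ε*(-s)) + ε*((M+Lf*P₀)*|s - 0|) := by
          rw [norm_smul, Real.norm_of_nonneg hε.le]
          exact add_le_add hmvt (mul_le_mul_of_nonneg_left hI hε.le)
      _ = ε*K₁*(-s) := by
          rw [hK₁def, sub_zero, abs_of_nonpos hs]; ring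
  have hxexp : ∀ s ≤ (0:ℝ), ‖(u s).1 - X₀‖ ≤ (ε*K₁/ν) * Real.exp ((-ν)*s) := by
    intro s hs
    have h1 : ν*(-s) ≤ Real.exp ((-ν)*s) := by
      have := Real.add_one_le_exp ((-ν)*s); nlinarith
    have h2 := hx s hs
    have h3 : ε*K₁*(-s) ≤ (ε*K₁/ν)*Real.exp ((-ν)*s) := by
      rw [div_mul_eq_mul_div, le_div_iff₀ hν0]
      nlinarith [mul_le_mul_of_nonneg_left h1 (mul_nonneg hε.le hK₁0)]
    exact le_trans h2 h3
  -- weighted sup of the defect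
  set dd : ℝ → ℝ := fun t => ‖(u t).2 - Ybar t‖ with hdd
  clear_value dd
  have hSne : ((fun t => Real.exp (ν*t) * dd t) '' (Iic 0)).Nonempty := ⟨_, 0, mem_Iic.mpr le_rfl, rfl⟩
  have hSb : BddAbove ((fun t => Real.exp (ν*t) * dd t) '' (Iic 0)) := by
    refine ⟨Cu + K, ?_⟩
    rintro x ⟨t, ht', rfl⟩
    dsimp only
    have ht : t ≤ (0:ℝ) := mem_Iic.mp ht'
    have h2 : ‖(u t).2‖ ≤ ‖u t‖ := norm_snd_le (u t)
    have h1 : dd t ≤ Cu + K := by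
      have h3 := norm_sub_le (u t).2 (Ybar t)
      have h4 := hCu' t ht
      have h5 := hK t ht
      simp only [hdd]
      linarith
    have h6 : Real.exp (ν*t) ≤ 1 := hexple _ (by nlinarith)
    have h0 : 0 ≤ dd t := by rw [hdd]; exact norm_nonneg _
    calc Real.exp (ν*t) * dd t ≤ 1*(Cu + K) := mul_le_mul h6 h1 h0 zero_le_one
      _ = Cu + K := one_mul _
  set S : ℝ := sSup ((fun t => Real.exp (ν*t) * dd t) '' (Iic 0)) with hSdef
  have hSub : ∀ t ≤ (0:ℝ), Real.exp (ν*t) * dd t ≤ S := fun t ht => le_csSup hSb ⟨t, mem_Iic.mpr ht, rfl⟩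
  clear_value S
  have hS0 : (0:ℝ) ≤ S := by
    refine le_trans (mul_nonneg (Real.exp_pos (ν*0)).le ?_) (hSub 0 le_rfl)
    rw [hdd]; exact norm_nonneg _
  have hdle : ∀ s ≤ (0:ℝ), dd s ≤ S * Real.exp ((-ν)*s) := by
    intro s hs
    have h1 := hSub s hs
    have h2 : Real.exp ((-ν)*s) * Real.exp (ν*s) = 1 := by
      rw [← Real.exp_add, show (-ν)*s + ν*s = 0 by ring, Real.exp_zero]
    calc dd s = (Real.exp ((-ν)*s) * Real.exp (ν*s)) * dd s := by rw [h2, one_mul]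
      _ = Real.exp ((-ν)*s) * (Real.exp (ν*s) * dd s) := by ring
      _ ≤ Real.exp ((-ν)*s) * S := mul_le_mul_of_nonneg_left h1 (Real.exp_pos _).le
      _ = S * Real.exp ((-ν)*s) := mul_comm _ _
  -- the main inequality
  have hmain : ∀ t ≤ (0:ℝ), Real.exp (ν*t) * dd t ≤ (Lg:ℝ)*(ε*K₁/ν + S)/(-β-ν) := by
    intro t ht
    have hvb : ∀ s ≤ (0:ℝ), ‖G (u s).1 (u s).2 s - G X₀ (Ybar s) s‖
        ≤ ((Lg:ℝ)*(ε*K₁/ν + S)) * Real.exp ((-ν)*s) := by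
      intro s hs
      have h1 := (hGl s).dist_le_mul ((u s).1, (u s).2) (X₀, Ybar s)
      rw [dist_eq_norm, Prod.dist_eq, dist_eq_norm, dist_eq_norm] at h1
      have h2 : max ‖(u s).1 - X₀‖ ‖(u s).2 - Ybar s‖
          ≤ (ε*K₁/ν) * Real.exp ((-ν)*s) + S * Real.exp ((-ν)*s) := by
        apply max_le
        · have := hxexp s hs
          have hSe : (0:ℝ) ≤ S * Real.exp ((-ν)*s) := mul_nonneg hS0 (Real.exp_pos _).le
          linarith
        · have := hdle s hs
          rw [hdd] at this
          have h0 : (0:ℝ) ≤ (ε*K₁/ν) * Real.exp ((-ν)*s) :=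
            mul_nonneg (div_nonneg (mul_nonneg hε.le hK₁0) hν0.le) (Real.exp_pos _).le
          linarith
      calc ‖G (u s).1 (u s).2 s - G X₀ (Ybar s) s‖
          ≤ (Lg:ℝ) * max ‖(u s).1 - X₀‖ ‖(u s).2 - Ybar s‖ := h1
        _ ≤ (Lg:ℝ) * ((ε*K₁/ν) * Real.exp ((-ν)*s) + S * Real.exp ((-ν)*s)) :=
            mul_le_mul_of_nonneg_left h2 hLg0
        _ = ((Lg:ℝ)*(ε*K₁/ν + S)) * Real.exp ((-ν)*s) := by ring
    have hvi : IntegrableOn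
        (fun s => expOp B (t-s) (G (u s).1 (u s).2 s - G X₀ (Ybar s) s)) (Iic t) :=
      IntegrableOn.congr_fun ((hYI1 t ht).sub (hYI2 t ht))
        (fun s _ => (map_sub (expOp B (t-s)) _ _).symm) measurableSet_Iic
    have hc0 : (0:ℝ) ≤ (Lg:ℝ)*(ε*K₁/ν + S) :=
      mul_nonneg hLg0 (add_nonneg (div_nonneg (mul_nonneg hε.le hK₁0) hν0.le) hS0)
    have h2 := hYbnd ((Lg:ℝ)*(ε*K₁/ν + S)) ν hc0 hbν t ht _ hvi hvb
    have h3 : dd t ≤ (Lg:ℝ)*(ε*K₁/ν + S) * Real.exp ((-ν)*t)/(-β-ν) := by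
      have hweq : (u t).2 - Ybar t
          = ∫ s in Iic t, expOp B (t-s) (G (u s).1 (u s).2 s - G X₀ (Ybar s) s) := by
        rw [(hueq t ht).2, hYeq t ht, ← integral_sub (hYI1 t ht) (hYI2 t ht)]
        congr 1
        ext s
        rw [map_sub]
      simp only [hdd]
      rw [hweq]
      exact h2
    have h4 : Real.exp (ν*t) * Real.exp ((-ν)*t) = 1 := by
      rw [← Real.exp_add, show ν*t + (-ν)*t = 0 by ring, Real.exp_zero]
    calc Real.exp (ν*t) * dd t
        ≤ Real.exp (ν*t) * ((Lg:ℝ)*(ε*K₁/ν + S) * Real.exp ((-ν)*t)/(-β-ν)) :=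
          mul_le_mul_of_nonneg_left h3 (Real.exp_pos _).le
      _ = (Lg:ℝ)*(ε*K₁/ν + S)/(-β-ν) := by
          rw [show Real.exp (ν*t) * ((Lg:ℝ)*(ε*K₁/ν + S) * Real.exp ((-ν)*t)/(-β-ν))
            = (Lg:ℝ)*(ε*K₁/ν + S) * (Real.exp (ν*t) * Real.exp ((-ν)*t))/(-β-ν) by ring, h4]
          ring
  -- wrap up
  have hSle : S ≤ (Lg:ℝ)*(ε*K₁/ν + S)/(-β-ν) := by
    conv_lhs => rw [hSdef]
    exact csSup_le hSne (by rintro x ⟨t, ht, rfl⟩; exact hmain t (mem_Iic.mp ht))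
  have hd0 : dd 0 ≤ S := by
    have h1 := hSub 0 le_rfl
    simpa using h1
  rw [le_div_iff₀ hbν] at hSle
  have h5 : (-β-ν-(Lg:ℝ))*S = ν*S := by rw [hνid]
  have hfin : ν*S ≤ (Lg:ℝ)*(ε*K₁/ν) := by nlinarith
  have h6 : S ≤ (Lg:ℝ)*(ε*K₁/ν)/ν := by
    rw [le_div_iff₀ hν0]; linarith [mul_comm S ν]
  have h7 : dd 0 ≤ ((Lg:ℝ)*K₁/ν^2)*ε := by
    calc dd 0 ≤ S := hd0
      _ ≤ (Lg:ℝ)*(ε*K₁/ν)/ν := h6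
      _ = ((Lg:ℝ)*K₁/ν^2)*ε := by ring
  have hC : ((Lg:ℝ)*K₁/ν^2 + 1)*ε = ((Lg:ℝ)*K₁/ν^2)*ε + ε := by ring
  have h8 : ‖(u 0).2 - Ybar 0‖ = dd 0 := by rw [hdd]
  linarith
end
end
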